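/- arXiv:1310.7208 — 8 statements merged into one kernel-verified Lean document; each statement's English description precedes it below -/
import Mathlib

section
/- For arbitrary monotone ordered paths (P_{r_1}, mon), ..., (P_{r_c}, mon), the ordered Ramsey number satisfies OR((P_{r_1},mon),...,(P_{r_c},mon)) = 1 + ∏_{i=1}^{c} (r_i − 1). -/
/-- The ordered complete graph on `Fin N`, edge-colored by `f` (on ordered pairs),
contains a copy of the ordered graph `G` in color `i`: an order-preserving
embedding mapping edges to edges of color `i`. -/
def hasOrdCopy {r N c : ℕ} (G : SimpleGraph (Fin r)) (f : Fin N → Fin N → Fin c) (i : Fin c) :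
    Prop :=
  ∃ g : Fin r → Fin N, StrictMono g ∧ ∀ a b : Fin r, a < b → G.Adj a b → f (g a) (g b) = i

/-- `N` satisfies the ordered Ramsey property for the ordered graphs `G i`:
every `c`-coloring of the ordered complete graph on `N` vertices contains a
copy of `G i` in color `i` for some `i`. -/
def ordRamseyProp {c : ℕ} (r : Fin c → ℕ) (G : ∀ i, SimpleGraph (Fin (r i))) (N : ℕ) : Prop :=
  ∀ f : Fin N → Fin N → Fin c, ∃ i : Fin c, hasOrdCopy (G i) f i

-- Auxiliary lemmas.

namespace OrdPathAux

variable {N c : ℕ}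

/-- Length (in vertices) of a longest monotone color-`i` path ending at `v`. -/
def colL (f : Fin N → Fin N → Fin c) (i : Fin c) (v : Fin N) : ℕ :=
  1 + ((Finset.univ.filter fun u : Fin N => u < v ∧ f u v = i).attach.sup fun u =>
    colL f i u.1)
termination_by v.val
decreasing_by exact (Finset.mem_filter.mp u.2).2.1

lemma one_le_colL (f : Fin N → Fin N → Fin c) (i : Fin c) (v : Fin N) :
    1 ≤ colL f i v := by
  rw [colL]; exact Nat.le_add_right 1 _

lemma colL_lt (f : Fin N → Fin N → Fin c) (i : Fin c) {u v : Fin N}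
    (h : u < v) (hf : f u v = i) : colL f i u < colL f i v := by
  conv_rhs => rw [colL]
  have hm : u ∈ Finset.univ.filter fun u : Fin N => u < v ∧ f u v = i := by
    simp [h, hf]
  have h2 := Finset.le_sup (f := fun u : {x // x ∈ Finset.univ.filter
      fun u : Fin N => u < v ∧ f u v = i} => colL f i u.1) (Finset.mem_attach _ ⟨u, hm⟩)
  rw [Nat.add_comm]
  exact Nat.lt_succ_of_le h2

lemma exists_chain (f : Fin N → Fin N → Fin c) (i : Fin c) (v : Fin N) :
    ∃ l : List (Fin N), l.Chain' (fun a b => a < b ∧ f a b = i) ∧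
      l.getLast? = some v ∧ l.length = colL f i v := by
  suffices H : ∀ n, ∀ v : Fin N, v.val = n → ∃ l : List (Fin N),
      l.Chain' (fun a b => a < b ∧ f a b = i) ∧
      l.getLast? = some v ∧ l.length = colL f i v from H v.val v rfl
  intro n
  induction n using Nat.strong_induction_on with
  | _ n ih =>
  intro v hv
  subst hv
  by_cases hs : (Finset.univ.filter fun u : Fin N => u < v ∧ f u v = i).Nonempty
  · obtain ⟨u, -, hu⟩ := Finset.exists_mem_eq_sup _ (Finset.attach_nonempty_iff.mpr hs)
      (fun u : {x // x ∈ Finset.univ.filter fun u : Fin N => u < v ∧ f u v = i} =>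
        colL f i u.1)
    obtain ⟨huv, hfu⟩ := (Finset.mem_filter.mp u.2).2
    obtain ⟨l, hl, hlast, hlen⟩ := ih u.1.val huv u.1 rfl
    refine ⟨l ++ [v], ?_, ?_, ?_⟩
    · refine hl.append (List.isChain_singleton v) ?_
      intro x hx y hy
      rw [hlast, Option.mem_some_iff] at hx
      simp only [List.head?_cons, Option.mem_some_iff] at hy
      subst hx; subst hy
      exact ⟨huv, hfu⟩
    · exact List.getLast?_concat
    · rw [colL, hu, List.length_append, hlen]
      simp [Nat.add_comm]
  · refine ⟨[v], List.isChain_singleton v, rfl, ?_⟩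
    rw [colL, Finset.not_nonempty_iff_eq_empty.mp hs]
    simp

lemma hasOrdCopy_of_le {r₀ : ℕ} (f : Fin N → Fin N → Fin c) (i : Fin c) (v : Fin N)
    (hle : r₀ ≤ colL f i v) :
    hasOrdCopy (SimpleGraph.pathGraph r₀) f i := by
  obtain ⟨l, hl, -, hlen⟩ := exists_chain f i v
  have hlt : ∀ a : Fin r₀, a.val < l.length := fun a => by omega
  refine ⟨fun a => l.get ⟨a.val, hlt a⟩, ?_, ?_⟩
  · have hp : l.Pairwise (· < ·) :=
      List.isChain_iff_pairwise.mp (hl.imp fun _ _ h => h.1)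
    intro a b hab
    exact List.pairwise_iff_get.mp hp ⟨a.val, hlt a⟩ ⟨b.val, hlt b⟩ hab
  · intro a b hab hadj
    rw [SimpleGraph.pathGraph_adj] at hadj
    have hab' : a.val < b.val := hab
    have hb : b.val = a.val + 1 := by omega
    have h2 := (List.isChain_iff_getElem.mp hl a.val (by omega)).2
    have hidx : (⟨b.val, hlt b⟩ : Fin l.length) = ⟨a.val + 1, by omega⟩ := Fin.ext hb
    show f (l.get ⟨a.val, hlt a⟩) (l.get ⟨b.val, hlt b⟩) = i
    rw [hidx]
    exact h2

end OrdPathAux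

open OrdPathAux in
/-- `OR((P_{r_1},mon),…,(P_{r_c},mon)) = 1 + ∏ (r_i − 1)`. -/
theorem ordered_ramsey_monotone_paths (c : ℕ) (hc : 0 < c) (r : Fin c → ℕ)
    (hr : ∀ i, 0 < r i) :
    IsLeast {N | ordRamseyProp r (fun i => SimpleGraph.pathGraph (r i)) N}
      (1 + ∏ i, (r i - 1)) := by
  constructor
  · -- membership
    intro f
    by_contra hcon
    push_neg at hcon
    have hb : ∀ (i : Fin c) (v : Fin (1 + ∏ i, (r i - 1))), colL f i v < r i := by
      intro i v
      by_contra hge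
      push_neg at hge
      exact hcon i (hasOrdCopy_of_le f i v hge)
    have hcard : Fintype.card (∀ i : Fin c, Fin (r i - 1)) <
        Fintype.card (Fin (1 + ∏ i, (r i - 1))) := by
      simp only [Fintype.card_pi, Fintype.card_fin]
      omega
    obtain ⟨u, v, hne, heq⟩ := Fintype.exists_ne_map_eq_of_card_lt
      (fun (v : Fin (1 + ∏ i, (r i - 1))) (i : Fin c) =>
        (⟨colL f i v - 1, by
          have h1 := one_le_colL f i v
          have h2 := hb i v
          omega⟩ : Fin (r i - 1))) hcard
    rcases hne.lt_or_gt with h | h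
    · have h1 := colL_lt f (f u v) h rfl
      have h2 := congrFun heq (f u v)
      have h3 : colL f (f u v) u - 1 = colL f (f u v) v - 1 :=
        congrArg Fin.val h2
      have h4 := one_le_colL f (f u v) u
      omega
    · have h1 := colL_lt f (f v u) h rfl
      have h2 := congrFun heq (f v u)
      have h3 : colL f (f v u) u - 1 = colL f (f v u) v - 1 :=
        congrArg Fin.val h2
      have h4 := one_le_colL f (f v u) v
      omega
  · -- lower bound
    intro M hM
    by_contra hMlt
    push_neg at hMlt
    have hMle : M ≤ ∏ i, (r i - 1) := by omega
    rcases Nat.eq_zero_or_pos M with rfl | hMpos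
    · obtain ⟨i, g, -, -⟩ := hM (fun a _ => Fin.elim0 a)
      exact Fin.elim0 (g ⟨0, hr i⟩)
    classical
    haveI hw : WellFoundedLT (Fin c) := inferInstance
    letI : LinearOrder (Lex (∀ i : Fin c, Fin (r i - 1))) :=
      @Pi.Lex.linearOrder (Fin c) (fun i => Fin (r i - 1))
        inferInstance hw (fun _ => inferInstance)
    letI : Fintype (Lex (∀ i : Fin c, Fin (r i - 1))) := Fintype.ofEquiv _ toLex
    have hcard : Fintype.card (Lex (∀ i : Fin c, Fin (r i - 1))) = ∏ i, (r i - 1) := by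
      rw [← Fintype.card_congr (toLex : (∀ i : Fin c, Fin (r i - 1)) ≃ _)]
      simp
    set e := Fintype.orderIsoFinOfCardEq (Lex (∀ i : Fin c, Fin (r i - 1))) hcard with he
    set E : Fin M → Lex (∀ i : Fin c, Fin (r i - 1)) :=
      fun v => e (Fin.castLE hMle v) with hE
    have hEmono : StrictMono E := by
      intro a b hab
      exact e.lt_iff_lt.mpr hab
    set f0 : Fin M → Fin M → Fin c := fun u v =>
      if h : ∃ i, ofLex (E u) i < ofLex (E v) i then h.choose else ⟨0, hc⟩ with hf0
    have key : ∀ u v : Fin M, u < v → ofLex (E u) (f0 u v) < ofLex (E v) (f0 u v) := by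
      intro u v huv
      have hlt : E u < E v := hEmono huv
      obtain ⟨i0, -, hi0⟩ := hlt
      have hex : ∃ i, ofLex (E u) i < ofLex (E v) i := ⟨i0, hi0⟩
      have : f0 u v = hex.choose := by
        rw [hf0]
        exact dif_pos hex
      rw [this]
      exact hex.choose_spec
    have hnocopy : ∀ i, ¬ hasOrdCopy (SimpleGraph.pathGraph (r i)) f0 i := by
      rintro i ⟨g, hg, hcol⟩
      have step : ∀ k (hk : k + 1 < r i),
          (ofLex (E (g ⟨k, by omega⟩)) i).val < (ofLex (E (g ⟨k + 1, hk⟩)) i).val := by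
        intro k hk
        have hab : (⟨k, by omega⟩ : Fin (r i)) < ⟨k + 1, hk⟩ := by
          simp [Fin.lt_def]
        have hadj : (SimpleGraph.pathGraph (r i)).Adj ⟨k, by omega⟩ ⟨k + 1, hk⟩ :=
          SimpleGraph.pathGraph_adj.mpr (Or.inl rfl)
        have hcoli := hcol _ _ hab hadj
        have hk2 := key (g ⟨k, by omega⟩) (g ⟨k + 1, hk⟩) (hg hab)
        rw [hcoli] at hk2
        exact hk2
      have ge : ∀ k, ∀ hk : k < r i, k ≤ (ofLex (E (g ⟨k, hk⟩)) i).val := by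
        intro k
        induction k with
        | zero => intro hk; exact Nat.zero_le _
        | succ k ih =>
          intro hk
          have h1 := step k hk
          have h2 := ih (by omega)
          omega
      have hlast := ge (r i - 1) (by have := hr i; omega)
      have hlt := (ofLex (E (g ⟨r i - 1, by have := hr i; omega⟩)) i).isLt
      omega
    obtain ⟨i, hcopy⟩ := hM f0
    exact hnocopy i hcopy
end

section
/- For integers r_1, r_2 ≥ 2, the ordered Ramsey number of two opposite stars satisfies OR(S_{1,r_1}, S_{r_2,1}) = floor((−1 + sqrt(1 + 8(r_1−2)(r_2−2)))/2) + r_1 + r_2 − 2. -/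
/-- A copy of the ordered graph `G` in color `col` in the `Bool`-colored ordered
complete graph on `Fin N`. -/
def hasOrdCopyB {r N : ℕ} (G : SimpleGraph (Fin r)) (f : Fin N → Fin N → Bool) (col : Bool) :
    Prop :=
  ∃ g : Fin r → Fin N, StrictMono g ∧ ∀ a b : Fin r, a < b → G.Adj a b → f (g a) (g b) = col

/-- `N` satisfies the two-color ordered Ramsey property for `(G, H)`: every
red/blue coloring of the ordered complete graph on `N` vertices contains a red
(`true`) ordered copy of `G` or a blue (`false`) ordered copy of `H`. -/
def ordRamsey2Prop {r s : ℕ} (G : SimpleGraph (Fin r)) (H : SimpleGraph (Fin s)) (N : ℕ) :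
    Prop :=
  ∀ f : Fin N → Fin N → Bool, hasOrdCopyB G f true ∨ hasOrdCopyB H f false
/-- The ordered star `S_{a,b}`: `a + b - 1` vertices, the center is the `a`-th
vertex (so it has `a - 1` left leaves and `b - 1` right leaves), joined to all
other vertices. -/
def ordStar (a b : ℕ) : SimpleGraph (Fin (a + b - 1)) :=
  SimpleGraph.fromRel (fun u _ => u.val = a - 1)

open Finset
set_option maxHeartbeats 1000000


/-- water-filling state: (level w, boundary b) after processing column q+k -/
def stf (p q : ℕ) : ℕ → ℕ × ℕ
  | 0 => (p - 1, 0)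
  | k+1 => let s := stf p q k
           if s.2 ≤ q then (s.1, s.2 + (k+1) - (p - s.1 - 1)) else (s.1 - 1, s.2 - q)

lemma stf_succ (p q k : ℕ) : stf p q (k+1) =
    (if (stf p q k).2 ≤ q then
      ((stf p q k).1, (stf p q k).2 + (k+1) - (p - (stf p q k).1 - 1))
    else ((stf p q k).1 - 1, (stf p q k).2 - q)) := rfl

/-- rows chosen by column q+k+1 -/
def Scol (p q k : ℕ) : Finset ℕ :=
  if (stf p q k).2 ≤ q then
    Finset.Ico (stf p q k).2 (stf p q (k+1)).2 ∪
      Finset.Ico (q+k+1 - (p - (stf p q k).1 - 1)) (q+k+1)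
  else
    Finset.Ico 0 (stf p q (k+1)).2 ∪ Finset.Ico (stf p q k).2 (q+k+1)

lemma Scol_def (p q k : ℕ) : Scol p q k =
  (if (stf p q k).2 ≤ q then
    Finset.Ico (stf p q k).2 (stf p q (k+1)).2 ∪
      Finset.Ico (q+k+1 - (p - (stf p q k).1 - 1)) (q+k+1)
  else
    Finset.Ico 0 (stf p q (k+1)).2 ∪ Finset.Ico (stf p q k).2 (q+k+1)) := rfl

/-- remaining capacity of row i after processing column q+k -/
def capF (p q k i : ℕ) : ℕ :=
  max ((stf p q k).1 + (if (stf p q k).2 ≤ i then 1 else 0)) (p - min p (q + k - i))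

/-- count of how many of the first k columns use row i -/
def cnt (p q k i : ℕ) : ℕ := ((Finset.range k).filter (fun k' => i ∈ Scol p q k')).card

lemma cnt_succ (p q k i : ℕ) :
    cnt p q (k+1) i = cnt p q k i + (if i ∈ Scol p q k then 1 else 0) := by
  unfold cnt
  rw [Finset.range_add_one, Finset.filter_insert]
  split
  · rw [Finset.card_insert_of_notMem (by simp)]
  · simp

/-- the full invariant -/
def WFInv (p q k : ℕ) : Prop :=
  p ≤ (stf p q k).1 + k + 1 ∧
  (stf p q k).2 + (p - (stf p q k).1) ≤ q + k + 1 ∧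
  (stf p q k).1 + 1 ≤ p ∧
  (2*(((p:ℤ) - (stf p q k).1)*(stf p q k).2 +
      ((p:ℤ) - (stf p q k).1 - 1)*((q:ℤ)+k+1-((p:ℤ)-(stf p q k).1)-(stf p q k).2)) +
    ((p:ℤ) - (stf p q k).1 - 1)*((p:ℤ) - (stf p q k).1) = (k:ℤ)*(k+1)) ∧
  (∀ i, cnt p q k i + capF p q k i = p)

lemma wfinv_zero (p q : ℕ) (hp : 1 ≤ p) : WFInv p q 0 := by
  have h0 : stf p q 0 = (p-1, 0) := rfl
  refine ⟨by rw [h0]; dsimp only; omega, by rw [h0]; dsimp only; omega,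
    by rw [h0]; dsimp only; omega, ?_, ?_⟩
  · rw [h0]
    dsimp only
    have h1 : ((p - 1 : ℕ) : ℤ) = (p:ℤ) - 1 := by omega
    rw [h1]
    push_cast
    ring
  · intro i
    have h1 : cnt p q 0 i = 0 := by simp [cnt]
    rw [h1, capF, h0]
    dsimp only
    rw [if_pos (Nat.zero_le i)]
    omega

lemma wfinv_succ (p q t k : ℕ) (hp : 1 ≤ p) (ht : t*(t+1) ≤ 2*p*q) (hk : k + 1 ≤ t + p)
    (IH : WFInv p q k) : WFInv p q (k+1) := by
  obtain ⟨hB, hC, hA, hD, hcnt⟩ := IH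
  by_cases hbq : (stf p q k).2 ≤ q
  · -- case (b)
    have hst : stf p q (k+1) =
        ((stf p q k).1, (stf p q k).2 + (k+1) - (p - (stf p q k).1 - 1)) := by
      rw [stf_succ, if_pos hbq]
    have hsub : p - (stf p q k).1 - 1 ≤ k := by omega
    refine ⟨by rw [hst]; dsimp only; omega, by rw [hst]; dsimp only; omega,
      by rw [hst]; dsimp only; omega, ?_, ?_⟩
    · rw [hst]
      dsimp only
      have hb' : (((stf p q k).2 + (k+1) - (p - (stf p q k).1 - 1) : ℕ) : ℤ)
          = ((stf p q k).2:ℤ) + (k+1) - ((p:ℤ) - (stf p q k).1 - 1) := by omega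
      rw [hb']
      push_cast at hD ⊢
      linear_combination hD
    · intro i
      rw [cnt_succ]
      have hcap : capF p q k i = capF p q (k+1) i + (if i ∈ Scol p q k then 1 else 0) := by
        unfold capF Scol
        rw [hst, if_pos hbq]
        simp only [Finset.mem_union, Finset.mem_Ico]
        split_ifs <;> omega
      have := hcnt i
      omega
  · -- case (c)
    have hst : stf p q (k+1) = ((stf p q k).1 - 1, (stf p q k).2 - q) := by
      rw [stf_succ, if_neg hbq]
    -- key: w ≥ 1
    have hw1 : 1 ≤ (stf p q k).1 := by
      by_contra hw0
      have hw0' : (stf p q k).1 = 0 := by omega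
      rw [hw0'] at hD hC
      have hq1 : 1 ≤ q := by
        rcases Nat.eq_zero_or_pos q with hq | hq
        · exfalso
          have ht0 : t = 0 := by nlinarith
          omega
        · exact hq
      have hkp : p ≤ k := by omega
      have hkt : (k:ℤ) ≤ (t:ℤ) + p - 1 := by push_cast; omega
      have hbq' : (q:ℤ) + 1 ≤ ((stf p q k).2:ℤ) := by push_cast; omega
      have hCb : ((stf p q k).2:ℤ) + p ≤ (q:ℤ) + k + 1 := by push_cast at hC ⊢; omega
      have htq : ((t:ℤ))*(t+1) ≤ 2*(p:ℤ)*q := by exact_mod_cast ht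
      have hkp' : (p:ℤ) ≤ (k:ℤ) := by exact_mod_cast hkp
      have hfac : ((k:ℤ) - p) * ((t:ℤ) + p - 1 - k) ≥ 0 :=
        mul_nonneg (by omega) (by omega)
      push_cast at hD
      have hE : (k:ℤ)*(k+1) = 2*((stf p q k).2:ℤ) + 2*((p:ℤ)-1)*((q:ℤ)+k+1-p) + (p:ℤ)*((p:ℤ)-1) := by
        linear_combination -hD
      have hp' : (1:ℤ) ≤ (p:ℤ) := by omega
      nlinarith [hE, hfac, htq, hbq', hp']
    have hbb : (((stf p q k).2 - q : ℕ) : ℤ) = ((stf p q k).2:ℤ) - q := by omega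
    have hww : (((stf p q k).1 - 1 : ℕ) : ℤ) = ((stf p q k).1:ℤ) - 1 := by omega
    refine ⟨by rw [hst]; dsimp only; omega, by rw [hst]; dsimp only; omega,
      by rw [hst]; dsimp only; omega, ?_, ?_⟩
    · rw [hst]
      dsimp only
      rw [hbb, hww]
      push_cast at hD ⊢
      linear_combination hD
    · intro i
      rw [cnt_succ]
      have hcap : capF p q k i = capF p q (k+1) i + (if i ∈ Scol p q k then 1 else 0) := by
        unfold capF Scol
        rw [hst, if_neg hbq]
        simp only [Finset.mem_union, Finset.mem_Ico]
        split_ifs <;> omega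
      have := hcnt i
      omega

lemma wfinv_all (p q t : ℕ) (hp : 1 ≤ p) (ht : t*(t+1) ≤ 2*p*q) :
    ∀ k, k ≤ t + p → WFInv p q k := by
  intro k
  induction k with
  | zero => intro _; exact wfinv_zero p q hp
  | succ n ih => intro h; exact wfinv_succ p q t n hp ht h (ih (by omega))

-- ### new part
lemma Scol_lt (p q k : ℕ) (h1 : WFInv p q k) (h2 : WFInv p q (k+1)) :
    ∀ i ∈ Scol p q k, i < q + k + 1 := by
  intro i hi
  rw [Scol_def] at hi
  obtain ⟨-, hC2, hA2, -, -⟩ := h2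
  split_ifs at hi with hbq <;>
    simp only [Finset.mem_union, Finset.mem_Ico] at hi <;> omega

lemma Scol_card (p q k : ℕ) (h1 : WFInv p q k) (h2 : WFInv p q (k+1)) :
    (Scol p q k).card = k + 1 := by
  obtain ⟨hB, hC, hA, -, -⟩ := h1
  obtain ⟨hB2, hC2, hA2, -, -⟩ := h2
  rw [Scol_def]
  split_ifs with hbq
  · have hst : (stf p q (k+1)).2 = (stf p q k).2 + (k+1) - (p - (stf p q k).1 - 1) := by
      rw [stf_succ, if_pos hbq]
    have hst1 : (stf p q (k+1)).1 = (stf p q k).1 := by rw [stf_succ, if_pos hbq]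
    rw [Finset.card_union_of_disjoint, Nat.card_Ico, Nat.card_Ico]
    · rw [hst1] at hC2; rw [hst] at hC2 ⊢; omega
    · rw [Finset.disjoint_left]
      intro a ha ha'
      simp only [Finset.mem_Ico] at ha ha'
      rw [hst1] at hC2; rw [hst] at hC2 ha; omega
  · have hst : (stf p q (k+1)).2 = (stf p q k).2 - q := by rw [stf_succ, if_neg hbq]
    have hst1 : (stf p q (k+1)).1 = (stf p q k).1 - 1 := by rw [stf_succ, if_neg hbq]
    rw [Finset.card_union_of_disjoint, Nat.card_Ico, Nat.card_Ico]
    · rw [hst]; omega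
    · rw [Finset.disjoint_left]
      intro a ha ha'
      simp only [Finset.mem_Ico] at ha ha'
      rw [hst] at ha; omega

def GoodF (p q m : ℕ) (F : ℕ → ℕ → Bool) : Prop :=
  (∀ i, ((Finset.range m).filter (fun j => i < j ∧ F i j = true)).card ≤ p) ∧
  (∀ v, v < m → ((Finset.range m).filter (fun u => u < v ∧ F u v = false)).card ≤ q)

def Fwf (p q : ℕ) : ℕ → ℕ → Bool := fun i j => decide (q < j ∧ i ∈ Scol p q (j - q - 1))

lemma exists_goodF (p q t : ℕ) (ht : t*(t+1) ≤ 2*p*q) : ∃ F, GoodF p q (t+p+q+1) F := by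
  rcases Nat.eq_zero_or_pos p with hp | hp
  · -- p = 0 : all-false coloring
    have ht0 : t = 0 := by nlinarith
    refine ⟨fun _ _ => false, fun i => ?_, fun v hv => ?_⟩
    · simp
    · calc ((Finset.range (t+p+q+1)).filter (fun u => u < v ∧ (false : Bool) = false)).card
          ≤ (Finset.range v).card := by
            apply Finset.card_le_card
            intro u hu
            simp only [Finset.mem_filter, Finset.mem_range] at hu ⊢
            exact hu.2.1
        _ ≤ q := by rw [Finset.card_range]; omega
  · have hinv := wfinv_all p q t hp ht
    set m := t + p + q + 1 with hm
    refine ⟨Fwf p q, fun i => ?_, fun v hv => ?_⟩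
    · -- row bound
      have key := (hinv (t+p) le_rfl).2.2.2.2 i
      calc ((Finset.range m).filter (fun j => i < j ∧ Fwf p q i j = true)).card
          ≤ cnt p q (t+p) i := by
            unfold cnt
            apply Finset.card_le_card_of_injOn (fun j => j - q - 1)
            · intro j hj
              simp only [Finset.mem_coe, Finset.mem_filter, Finset.mem_range] at hj ⊢
              obtain ⟨hjm, _, hF⟩ := hj
              simp only [Fwf, decide_eq_true_eq] at hF
              exact ⟨by omega, hF.2⟩
            · intro j₁ hj₁ j₂ hj₂ he
              simp only [Finset.coe_filter, Set.mem_setOf_eq] at hj₁ hj₂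
              obtain ⟨-, -, hF₁⟩ := hj₁
              obtain ⟨-, -, hF₂⟩ := hj₂
              simp only [Fwf, decide_eq_true_eq] at hF₁ hF₂
              simp only at he
              omega
        _ ≤ p := by omega
    · -- column bound
      rcases le_or_gt v q with hvq | hvq
      · calc ((Finset.range m).filter (fun u => u < v ∧ Fwf p q u v = false)).card
            ≤ (Finset.range v).card := by
              apply Finset.card_le_card
              intro u hu
              simp only [Finset.mem_filter, Finset.mem_range] at hu ⊢
              exact hu.2.1
          _ ≤ q := by rw [Finset.card_range]; omega
      · set k := v - q - 1 with hk
        have hvk : v = q + k + 1 := by omega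
        have hkb : k + 1 ≤ t + p := by omega
        have h1 := hinv k (by omega)
        have h2 := hinv (k+1) hkb
        have hsub : Scol p q k ⊆
            (Finset.range v).filter (fun u => Fwf p q u v = true) := by
          intro u hu
          simp only [Finset.mem_filter, Finset.mem_range, Fwf, decide_eq_true_eq]
          have := Scol_lt p q k h1 h2 u hu
          exact ⟨by omega, by omega, by rw [show v - q - 1 = k by omega]; exact hu⟩
        set Ψ := (Finset.range m).filter (fun u => u < v ∧ Fwf p q u v = false) with hΨ
        have hdisj : Disjoint Ψ (Scol p q k) := by
          rw [Finset.disjoint_left]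
          intro u hu hu'
          have h3 := hsub hu'
          simp only [hΨ, Finset.mem_filter] at hu h3
          rw [hu.2.2] at h3
          exact absurd h3.2 (by simp)
        have hsub2 : Ψ ∪ Scol p q k ⊆ Finset.range v := by
          apply Finset.union_subset
          · intro u hu
            simp only [hΨ, Finset.mem_filter, Finset.mem_range] at hu ⊢
            exact hu.2.1
          · intro u hu
            exact Finset.mem_of_mem_filter u (hsub hu)
        have h4 := Finset.card_le_card hsub2
        rw [Finset.card_union_of_disjoint hdisj, Finset.card_range,
          Scol_card p q k h1 h2] at h4
        omega

-- degree sets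
def outT {N : ℕ} (f : Fin N → Fin N → Bool) (v : Fin N) : Finset (Fin N) :=
  (Finset.Ioi v).filter (fun w => f v w = true)
def inT {N : ℕ} (f : Fin N → Fin N → Bool) (v : Fin N) : Finset (Fin N) :=
  (Finset.Iio v).filter (fun u => f u v = true)
def inF {N : ℕ} (f : Fin N → Fin N → Bool) (v : Fin N) : Finset (Fin N) :=
  (Finset.Iio v).filter (fun u => f u v = false)

lemma red_destruct {N r : ℕ} (hr : 1 ≤ r) (f : Fin N → Fin N → Bool)
    (h : hasOrdCopyB (ordStar 1 r) f true) :
    ∃ v : Fin N, r - 1 ≤ (outT f v).card := by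
  obtain ⟨g, hg, hadj⟩ := h
  have h0 : (0 : ℕ) < 1 + r - 1 := by omega
  set z : Fin (1 + r - 1) := ⟨0, h0⟩ with hz
  refine ⟨g z, ?_⟩
  have hsub : (Finset.univ.filter (fun a => z < a)).image g ⊆ outT f (g z) := by
    intro w hw
    simp only [Finset.mem_image, Finset.mem_filter, Finset.mem_univ, true_and] at hw
    obtain ⟨a, ha, rfl⟩ := hw
    simp only [outT, Finset.mem_filter, Finset.mem_Ioi]
    refine ⟨hg ha, ?_⟩
    apply hadj z a ha
    rw [ordStar, SimpleGraph.fromRel_adj]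
    refine ⟨fun hc => by rw [hc] at ha; exact lt_irrefl _ ha, Or.inl rfl⟩
  have hcard : (Finset.univ.filter (fun a => z < a)).card = r - 1 := by
    have he : (Finset.univ.filter (fun a => z < a)) = Finset.Ioi z := by
      ext a; simp [Finset.mem_Ioi]
    rw [he, Fin.card_Ioi]
    simp [hz]
  calc r - 1 = ((Finset.univ.filter (fun a => z < a)).image g).card := by
        rw [Finset.card_image_of_injective _ hg.injective, hcard]
    _ ≤ (outT f (g z)).card := Finset.card_le_card hsub

lemma blue_destruct {N r : ℕ} (hr : 1 ≤ r) (f : Fin N → Fin N → Bool)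
    (h : hasOrdCopyB (ordStar r 1) f false) :
    ∃ v : Fin N, r - 1 ≤ (inF f v).card := by
  obtain ⟨g, hg, hadj⟩ := h
  have h0 : r - 1 < r + 1 - 1 := by omega
  set z : Fin (r + 1 - 1) := ⟨r - 1, h0⟩ with hz
  refine ⟨g z, ?_⟩
  have hsub : (Finset.univ.filter (fun a => a < z)).image g ⊆ inF f (g z) := by
    intro w hw
    simp only [Finset.mem_image, Finset.mem_filter, Finset.mem_univ, true_and] at hw
    obtain ⟨a, ha, rfl⟩ := hw
    simp only [inF, Finset.mem_filter, Finset.mem_Iio]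
    refine ⟨hg ha, ?_⟩
    apply hadj a z ha
    rw [ordStar, SimpleGraph.fromRel_adj]
    exact ⟨fun hc => by rw [hc] at ha; exact lt_irrefl _ ha, Or.inr rfl⟩
  have hcard : (Finset.univ.filter (fun a => a < z)).card = r - 1 := by
    have he : (Finset.univ.filter (fun a => a < z)) = Finset.Iio z := by
      ext a; simp [Finset.mem_Iio]
    rw [he, Fin.card_Iio]
  calc r - 1 = ((Finset.univ.filter (fun a => a < z)).image g).card := by
        rw [Finset.card_image_of_injective _ hg.injective, hcard]
    _ ≤ (inF f (g z)).card := Finset.card_le_card hsub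

lemma red_build {N r : ℕ} (hr : 1 ≤ r) (f : Fin N → Fin N → Bool) (v : Fin N)
    (S : Finset (Fin N)) (hcard : S.card = r - 1)
    (hS : ∀ w ∈ S, v < w ∧ f v w = true) :
    hasOrdCopyB (ordStar 1 r) f true := by
  set e := S.orderEmbOfFin hcard with he
  refine ⟨fun a => if h : a.val = 0 then v else e ⟨a.val - 1, by omega⟩, ?_, ?_⟩
  · intro a b hab
    rw [Fin.lt_def] at hab
    by_cases ha : a.val = 0 <;> by_cases hb : b.val = 0
    · omega
    · simp only [dif_pos ha, dif_neg hb]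
      exact (hS _ (S.orderEmbOfFin_mem hcard _)).1
    · omega
    · simp only [dif_neg ha, dif_neg hb]
      exact e.strictMono (by rw [Fin.mk_lt_mk]; omega)
  · intro a b hab hadj
    rw [ordStar, SimpleGraph.fromRel_adj] at hadj
    rw [Fin.lt_def] at hab
    rcases hadj.2 with h1 | h1
    · have ha : a.val = 0 := by omega
      have hb : ¬ b.val = 0 := by omega
      simp only [dif_pos ha, dif_neg hb]
      exact (hS _ (S.orderEmbOfFin_mem hcard _)).2
    · omega

lemma blue_build {N r : ℕ} (hr : 1 ≤ r) (f : Fin N → Fin N → Bool) (v : Fin N)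
    (S : Finset (Fin N)) (hcard : S.card = r - 1)
    (hS : ∀ u ∈ S, u < v ∧ f u v = false) :
    hasOrdCopyB (ordStar r 1) f false := by
  set e := S.orderEmbOfFin hcard with he
  have hrr : r + 1 - 1 = r := by omega
  refine ⟨fun a => if h : a.val < r - 1 then e ⟨a.val, h⟩ else v, ?_, ?_⟩
  · intro a b hab
    rw [Fin.lt_def] at hab
    have hbr : b.val < r + 1 - 1 := b.isLt
    by_cases ha : a.val < r - 1 <;> by_cases hb : b.val < r - 1
    · simp only [dif_pos ha, dif_pos hb]
      exact e.strictMono (by rw [Fin.mk_lt_mk]; omega)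
    · simp only [dif_pos ha, dif_neg hb]
      exact (hS _ (S.orderEmbOfFin_mem hcard _)).1
    · omega
    · omega
  · intro a b hab hadj
    rw [ordStar, SimpleGraph.fromRel_adj] at hadj
    rw [Fin.lt_def] at hab
    have hbr : b.val < r + 1 - 1 := b.isLt
    rcases hadj.2 with h1 | h1
    · omega
    · have hb : ¬ b.val < r - 1 := by omega
      have ha : a.val < r - 1 := by omega
      simp only [dif_pos ha, dif_neg hb]
      exact (hS _ (S.orderEmbOfFin_mem hcard _)).2

lemma double_count {N : ℕ} (f : Fin N → Fin N → Bool) :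
    ∑ v, (outT f v).card = ∑ w, (inT f w).card := by
  have h1 : ∀ v, (outT f v).card = ∑ w, if v < w ∧ f v w = true then 1 else 0 := by
    intro v
    rw [outT, Finset.card_filter]
    rw [← Finset.sum_filter_add_sum_filter_not Finset.univ (fun w => v < w)]
    have e1 : Finset.univ.filter (fun w => v < w) = Finset.Ioi v := by ext a; simp
    rw [e1]
    have e2 : ∀ w ∈ Finset.Ioi v, (if f v w = true then 1 else 0)
        = if v < w ∧ f v w = true then 1 else 0 := by
      intro w hw; simp only [Finset.mem_Ioi] at hw; simp [hw]
    rw [Finset.sum_congr rfl e2]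
    have e3 : ∀ w ∈ Finset.univ.filter (fun w => ¬ v < w),
        (if v < w ∧ f v w = true then (1:ℕ) else 0) = 0 := by
      intro w hw; simp only [Finset.mem_filter] at hw; simp [hw.2]
    rw [Finset.sum_congr rfl e3]
    simp
  have h2 : ∀ w, (inT f w).card = ∑ v, if v < w ∧ f v w = true then 1 else 0 := by
    intro w
    rw [inT, Finset.card_filter]
    rw [← Finset.sum_filter_add_sum_filter_not Finset.univ (fun v => v < w)]
    have e1 : Finset.univ.filter (fun v => v < w) = Finset.Iio w := by ext a; simp
    rw [e1]
    have e2 : ∀ v ∈ Finset.Iio w, (if f v w = true then 1 else 0)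
        = if v < w ∧ f v w = true then 1 else 0 := by
      intro v hv; simp only [Finset.mem_Iio] at hv; simp [hv]
    rw [Finset.sum_congr rfl e2]
    have e3 : ∀ v ∈ Finset.univ.filter (fun v => ¬ v < w),
        (if v < w ∧ f v w = true then (1:ℕ) else 0) = 0 := by
      intro v hv; simp only [Finset.mem_filter] at hv; simp [hv.2]
    rw [Finset.sum_congr rfl e3]
    simp
  simp_rw [h1, h2]
  exact Finset.sum_comm

-- sums
lemma sum_sub_const (M c : ℕ) (hc : c ≤ M) :
    ∑ d ∈ Finset.range M, (d - c) = ∑ e ∈ Finset.range (M - c), e := by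
  have h0 : ∑ d ∈ Finset.range M, (d - c)
      = ∑ d ∈ Finset.Ico 0 c, (d - c) + ∑ d ∈ Finset.Ico c M, (d - c) := by
    rw [Finset.sum_Ico_consecutive _ (Nat.zero_le c) hc, ← Finset.range_eq_Ico]
  have h1 : ∑ d ∈ Finset.Ico 0 c, (d - c) = 0 := by
    apply Finset.sum_eq_zero
    intro d hd
    simp only [Finset.mem_Ico] at hd
    omega
  have h2 : ∑ d ∈ Finset.Ico c M, (d - c) = ∑ e ∈ Finset.range (M - c), e := by
    rw [Finset.sum_Ico_eq_sum_range]
    apply Finset.sum_congr rfl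
    intro e _
    omega
  omega

lemma sum_min_const (M c : ℕ) (hc : c + 1 ≤ M) :
    ∑ d ∈ Finset.range M, min c d = (∑ d ∈ Finset.range (c+1), d) + (M - (c+1))*c := by
  have h0 : ∑ d ∈ Finset.range M, min c d
      = ∑ d ∈ Finset.Ico 0 (c+1), min c d + ∑ d ∈ Finset.Ico (c+1) M, min c d := by
    rw [Finset.sum_Ico_consecutive _ (Nat.zero_le (c+1)) hc, ← Finset.range_eq_Ico]
  have h1 : ∑ d ∈ Finset.Ico 0 (c+1), min c d = ∑ d ∈ Finset.range (c+1), d := by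
    rw [← Finset.range_eq_Ico]
    apply Finset.sum_congr rfl
    intro d hd
    simp only [Finset.mem_range] at hd
    omega
  have h2 : ∑ d ∈ Finset.Ico (c+1) M, min c d = (M - (c+1)) * c := by
    calc ∑ d ∈ Finset.Ico (c+1) M, min c d = ∑ _d ∈ Finset.Ico (c+1) M, c :=
          Finset.sum_congr rfl (fun d hd => by simp only [Finset.mem_Ico] at hd; omega)
      _ = (M - (c+1)) * c := by rw [Finset.sum_const, Nat.card_Ico, smul_eq_mul]
  omega

lemma member (p q t : ℕ) (hup : 2*p*q < (t+1)*(t+2)) :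
    ordRamsey2Prop (ordStar 1 (p+2)) (ordStar (q+2) 1) (t+p+q+2) := by
  set M := t+p+q+2 with hM
  intro f
  by_contra hcon
  push_neg at hcon
  obtain ⟨hred, hblue⟩ := hcon
  -- out-degree bounds
  have hout : ∀ v : Fin M, (outT f v).card ≤ p := by
    intro v
    by_contra hc
    push_neg at hc
    obtain ⟨S, hSsub, hScard⟩ := Finset.exists_subset_card_eq (show p+1 ≤ (outT f v).card by omega)
    have hS2 : S.card = p + 2 - 1 := by omega
    exact hred (red_build (by omega) f v S hS2
      (fun w hw => by
        have := hSsub hw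
        simp only [outT, Finset.mem_filter, Finset.mem_Ioi] at this
        exact this))
  have hin : ∀ v : Fin M, (inF f v).card ≤ q := by
    intro v
    by_contra hc
    push_neg at hc
    obtain ⟨S, hSsub, hScard⟩ := Finset.exists_subset_card_eq (show q+1 ≤ (inF f v).card by omega)
    have hS2 : S.card = q + 2 - 1 := by omega
    exact hblue (blue_build (by omega) f v S hS2
      (fun u hu => by
        have := hSsub hu
        simp only [inF, Finset.mem_filter, Finset.mem_Iio] at this
        exact this))
  -- per-vertex in-true lower bound
  have hinT : ∀ w : Fin M, (w.val - q) ≤ (inT f w).card := by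
    intro w
    have hsplit : (inT f w).card + (inF f w).card = w.val := by
      have h1 : inF f w = (Finset.Iio w).filter (fun u => ¬ (f u w = true)) := by
        ext u
        simp [inF, Bool.not_eq_true]
      rw [inT, h1, Finset.card_filter_add_card_filter_not, Fin.card_Iio]
    have := hin w
    omega
  have houtM : ∀ v : Fin M, (outT f v).card ≤ min p (M - 1 - v.val) := by
    intro v
    refine le_min (hout v) ?_
    calc (outT f v).card ≤ (Finset.Ioi v).card := Finset.card_filter_le _ _
      _ = M - 1 - v.val := Fin.card_Ioi v
  -- sum up
  have hsum1 : ∑ d ∈ Finset.range M, (d - q) ≤ ∑ w : Fin M, (inT f w).card := by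
    rw [← Fin.sum_univ_eq_sum_range (fun d => d - q) M]
    exact Finset.sum_le_sum (fun w _ => hinT w)
  have hsum2 : ∑ v : Fin M, (outT f v).card ≤ ∑ d ∈ Finset.range M, min p d := by
    have h1 : ∑ v : Fin M, (outT f v).card ≤ ∑ v : Fin M, min p (M - 1 - v.val) :=
      Finset.sum_le_sum (fun v _ => houtM v)
    have h2 : ∑ v : Fin M, min p (M - 1 - v.val) = ∑ d ∈ Finset.range M, min p (M - 1 - d) :=
      Fin.sum_univ_eq_sum_range (fun d => min p (M - 1 - d)) M
    have h3 : ∑ d ∈ Finset.range M, min p (M - 1 - d) = ∑ d ∈ Finset.range M, min p d := by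
      exact Finset.sum_range_reflect (fun d => min p d) M
    omega
  have hkey : ∑ d ∈ Finset.range M, (d - q) ≤ ∑ d ∈ Finset.range M, min p d := by
    have := double_count f
    omega
  rw [sum_sub_const M q (by omega), sum_min_const M p (by omega)] at hkey
  have g1 := Finset.sum_range_id_mul_two (M - q)
  have g2 := Finset.sum_range_id_mul_two (p+1)
  have e1 : M - q = t+p+2 := by omega
  have e2 : M - (p+1) = t+q+1 := by omega
  rw [e1] at g1
  rw [e1, e2] at hkey
  have e3 : t+p+2-1 = t+p+1 := rfl
  have e4 : p+1-1 = p := rfl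
  rw [e3] at g1
  rw [e4] at g2
  -- now pure arithmetic contradiction
  nlinarith [hkey, g1, g2, hup]

lemma arith (p q : ℕ) :
    ∃ t : ℕ, (⌊(-1 + Real.sqrt (1 + 8 * (p:ℝ) * (q:ℝ))) / 2⌋ = (t:ℤ)) ∧
      t*(t+1) ≤ 2*p*q ∧ 2*p*q < (t+1)*(t+2) := by
  set n := Nat.sqrt (8*p*q+1) with hn
  have hs1 : n^2 ≤ 8*p*q+1 := Nat.sqrt_le' _
  have hs2 : 8*p*q+1 < (n+1)^2 := Nat.lt_succ_sqrt' _
  have hn1 : 1 ≤ n := by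
    by_contra hc
    have : n = 0 := by omega
    rw [this] at hs2
    simp at hs2
  refine ⟨(n-1)/2, ?_, ?_, ?_⟩
  · -- floor computation
    set t := (n-1)/2 with ht
    have hb : 2*t+1 ≤ n ∧ n ≤ 2*t+2 := by constructor <;> omega
    have hc0 : (0:ℝ) ≤ 1 + 8 * (p:ℝ) * (q:ℝ) := by positivity
    have hcast : (1 + 8 * (p:ℝ) * (q:ℝ)) = ((8*p*q+1 : ℕ) : ℝ) := by push_cast; ring
    have hlow : ((2*t+1 : ℕ) : ℝ) ≤ Real.sqrt (1 + 8 * (p:ℝ) * (q:ℝ)) := by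
      rw [Real.le_sqrt (by positivity) hc0, hcast]
      have h1 : ((2*t+1:ℕ))^2 ≤ 8*p*q+1 := le_trans (Nat.pow_le_pow_left hb.1 2) hs1
      exact_mod_cast h1
    have hhigh : Real.sqrt (1 + 8 * (p:ℝ) * (q:ℝ)) < ((2*t+3 : ℕ) : ℝ) := by
      rw [Real.sqrt_lt' (by positivity), hcast]
      have h1 : 8*p*q+1 < (2*t+3)^2 := lt_of_lt_of_le hs2 (Nat.pow_le_pow_left (by omega) 2)
      exact_mod_cast h1
    rw [Int.floor_eq_iff]
    constructor
    · rw [le_div_iff₀ (by norm_num : (0:ℝ) < 2)]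
      push_cast at hlow ⊢
      linarith
    · rw [div_lt_iff₀ (by norm_num : (0:ℝ) < 2)]
      push_cast at hhigh ⊢
      linarith
  · -- t(t+1) ≤ 2pq
    set t := (n-1)/2 with ht
    have hb : 2*t+1 ≤ n := by omega
    have h1 : (2*t+1)^2 ≤ n^2 := Nat.pow_le_pow_left hb 2
    nlinarith [hs1, h1]
  · set t := (n-1)/2 with ht
    have hb : n+1 ≤ 2*t+3 := by omega
    have h1 : (n+1)^2 ≤ (2*t+3)^2 := Nat.pow_le_pow_left hb 2
    nlinarith [hs2, h1]


lemma lower_no (p q t N : ℕ) (ht : t*(t+1) ≤ 2*p*q) (hN : N ≤ t+p+q+1)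
    (h : ordRamsey2Prop (ordStar 1 (p+2)) (ordStar (q+2) 1) N) : False := by
  obtain ⟨F, hF1, hF2⟩ := exists_goodF p q t ht
  set f : Fin N → Fin N → Bool := fun i j => F i.val j.val with hf
  rcases h f with hred | hblue
  · obtain ⟨v, hv⟩ := red_destruct (by omega) f hred
    have hsub : (outT f v).image Fin.val ⊆
        (Finset.range (t+p+q+1)).filter (fun j => v.val < j ∧ F v.val j = true) := by
      intro x hx
      simp only [Finset.mem_image] at hx
      obtain ⟨w, hw, rfl⟩ := hx
      simp only [outT, Finset.mem_filter, Finset.mem_Ioi] at hw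
      simp only [Finset.mem_filter, Finset.mem_range]
      exact ⟨by omega, hw.1, hw.2⟩
    have hcard : ((outT f v).image Fin.val).card = (outT f v).card :=
      Finset.card_image_of_injective _ Fin.val_injective
    have h1 := hF1 v.val
    have h2 := Finset.card_le_card hsub
    omega
  · obtain ⟨v, hv⟩ := blue_destruct (by omega) f hblue
    have hsub : (inF f v).image Fin.val ⊆
        (Finset.range (t+p+q+1)).filter (fun u => u < v.val ∧ F u v.val = false) := by
      intro x hx
      simp only [Finset.mem_image] at hx
      obtain ⟨u, hu, rfl⟩ := hx
      simp only [inF, Finset.mem_filter, Finset.mem_Iio] at hu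
      simp only [Finset.mem_filter, Finset.mem_range]
      exact ⟨by omega, hu.1, hu.2⟩
    have hcard : ((inF f v).image Fin.val).card = (inF f v).card :=
      Finset.card_image_of_injective _ Fin.val_injective
    have h1 := hF2 v.val (by omega)
    have h2 := Finset.card_le_card hsub
    omega

/-- for `r₁, r₂ ≥ 2`,
`OR(S_{1,r₁}, S_{r₂,1}) = ⌊(−1 + √(1 + 8(r₁−2)(r₂−2)))/2⌋ + r₁ + r₂ − 2`. -/
theorem ordered_ramsey_opposite_stars (r₁ r₂ : ℕ) (h₁ : 2 ≤ r₁) (h₂ : 2 ≤ r₂) (N₀ : ℕ)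
    (hN₀ : (N₀ : ℤ) =
      ⌊(-1 + Real.sqrt (1 + 8 * ((r₁ : ℝ) - 2) * ((r₂ : ℝ) - 2))) / 2⌋ + r₁ + r₂ - 2) :
    IsLeast {N | ordRamsey2Prop (ordStar 1 r₁) (ordStar r₂ 1) N} N₀ := by
  obtain ⟨p, rfl⟩ : ∃ p, r₁ = p + 2 := ⟨r₁ - 2, by omega⟩
  obtain ⟨q, rfl⟩ : ∃ q, r₂ = q + 2 := ⟨r₂ - 2, by omega⟩
  obtain ⟨t, hfl, hlo, hup⟩ := arith p q
  have hcast1 : ((p + 2 : ℕ) : ℝ) - 2 = (p:ℝ) := by push_cast; ring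
  have hcast2 : ((q + 2 : ℕ) : ℝ) - 2 = (q:ℝ) := by push_cast; ring
  rw [hcast1, hcast2, hfl] at hN₀
  have hN : N₀ = t + p + q + 2 := by omega
  constructor
  · show ordRamsey2Prop (ordStar 1 (p+2)) (ordStar (q+2) 1) N₀
    rw [hN]
    exact member p q t hup
  · intro N hNm
    by_contra hlt
    push_neg at hlt
    exact lower_no p q t N hlo (by omega) hNm
end

section
/- There is a constant C = C(c) such that for any positive integers r_1,...,r_c, s_1,...,s_c and the ordered stars S_{r_1,s_1},...,S_{r_c,s_c}, we have OR(S_{r_1,s_1},...,S_{r_c,s_c}) ≤ C · max{r_1,...,r_c, s_1,...,s_c}. -/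
lemma star_copy {N c : ℕ} (f : Fin N → Fin N → Fin c) (i : Fin c) (ri si : ℕ)
    (hri : 0 < ri) (hsi : 0 < si) (v : Fin N)
    (hl : ri - 1 ≤ (Finset.univ.filter fun u => u < v ∧ f u v = i).card)
    (hr : si - 1 ≤ (Finset.univ.filter fun w => v < w ∧ f v w = i).card) :
    hasOrdCopy (ordStar ri si) f i := by
  classical
  obtain ⟨L, hLsub, hLcard⟩ := Finset.exists_subset_card_eq hl
  obtain ⟨R, hRsub, hRcard⟩ := Finset.exists_subset_card_eq hr
  have hLv : ∀ u ∈ L, u < v ∧ f u v = i := fun u hu => (Finset.mem_filter.1 (hLsub hu)).2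
  have hRv : ∀ w ∈ R, v < w ∧ f v w = i := fun w hw => (Finset.mem_filter.1 (hRsub hw)).2
  set t : Finset (Fin N) := (L ∪ {v}) ∪ R with ht
  have hvt : v ∈ t := by simp [ht]
  have hd1 : Disjoint L {v} := by
    simp only [Finset.disjoint_singleton_right]
    intro hv; exact absurd (hLv v hv).1 (lt_irrefl v)
  have hd2 : Disjoint (L ∪ {v}) R := by
    rw [Finset.disjoint_union_left]
    constructor
    · rw [Finset.disjoint_left]; intro u hu hu'
      exact absurd ((hLv u hu).1.trans (hRv u hu').1) (lt_irrefl u)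
    · simp only [Finset.disjoint_singleton_left]
      intro hv; exact absurd (hRv v hv).1 (lt_irrefl v)
  have hcard : t.card = ri + si - 1 := by
    rw [ht, Finset.card_union_of_disjoint hd2, Finset.card_union_of_disjoint hd1,
      hLcard, hRcard, Finset.card_singleton]
    omega
  set e := t.orderIsoOfFin hcard with he
  set j := e.symm ⟨v, hvt⟩ with hj
  have hev : (e j : Fin N) = v := by
    have h1 : e j = ⟨v, hvt⟩ := by rw [hj]; exact e.apply_symm_apply _
    rw [h1]
  have hIio : ∀ a : Fin (ri + si - 1), ((e a : Fin N) < v ↔ a < j) := by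
    intro a
    rw [← hev, Subtype.coe_lt_coe, e.lt_iff_lt]
  have hmemL : ∀ a : Fin (ri + si - 1), (e a : Fin N) < v → (e a : Fin N) ∈ L := by
    intro a ha
    have hat : (e a : Fin N) ∈ (L ∪ {v}) ∪ R := (e a).2
    rcases Finset.mem_union.1 hat with h | h
    · rcases Finset.mem_union.1 h with h | h
      · exact h
      · exact absurd (Finset.mem_singleton.1 h ▸ ha) (lt_irrefl v)
    · exact absurd ((hRv _ h).1.trans ha) (lt_irrefl _)
  have hmemR : ∀ a : Fin (ri + si - 1), v < (e a : Fin N) → (e a : Fin N) ∈ R := by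
    intro a ha
    have hat : (e a : Fin N) ∈ (L ∪ {v}) ∪ R := (e a).2
    rcases Finset.mem_union.1 hat with h | h
    · rcases Finset.mem_union.1 h with h | h
      · exact absurd (ha.trans (hLv _ h).1) (lt_irrefl _)
      · exact absurd (Finset.mem_singleton.1 h ▸ ha) (lt_irrefl v)
    · exact h
  have hjval : (j : ℕ) = ri - 1 := by
    have hcardIio : (Finset.Iio j).card = (j : ℕ) := Fin.card_Iio j
    have hbij : (Finset.Iio j).card = L.card := by
      apply Finset.card_bij (fun a _ => (e a : Fin N))
      · intro a ha
        exact hmemL a ((hIio a).2 (Finset.mem_Iio.1 ha))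
      · intro a _ b _ hab
        exact e.injective (Subtype.coe_injective hab)
      · intro u hu
        have hut : u ∈ t := by
          rw [ht]; exact Finset.mem_union_left _ (Finset.mem_union_left _ hu)
        refine ⟨e.symm ⟨u, hut⟩, ?_, ?_⟩
        · rw [Finset.mem_Iio]
          apply (hIio _).1
          have h2 : e (e.symm ⟨u, hut⟩) = ⟨u, hut⟩ := e.apply_symm_apply _
          rw [h2]
          exact (hLv u hu).1
        · have h2 : e (e.symm ⟨u, hut⟩) = ⟨u, hut⟩ := e.apply_symm_apply _
          rw [h2]
    rw [← hcardIio, hbij, hLcard]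
  refine ⟨fun a => (e a : Fin N), ?_, ?_⟩
  · intro a b hab
    exact Subtype.coe_lt_coe.2 (e.lt_iff_lt.2 hab)
  · intro a b hab hadj
    rw [ordStar, SimpleGraph.fromRel_adj] at hadj
    obtain ⟨hne, hcase⟩ := hadj
    rcases hcase with hca | hcb
    · -- a is the center
      have haj : a = j := Fin.ext (by rw [hca, hjval])
      have hga : (e a : Fin N) = v := by rw [haj, hev]
      have hvb : v < (e b : Fin N) := by
        rw [← hga]
        exact Subtype.coe_lt_coe.2 (e.lt_iff_lt.2 hab)
      have h3 := (hRv _ (hmemR b hvb)).2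
      show f (e a : Fin N) (e b : Fin N) = i
      rw [hga]; exact h3
    · -- b is the center
      have hbj : b = j := Fin.ext (by rw [hcb, hjval])
      have hgb : (e b : Fin N) = v := by rw [hbj, hev]
      have hav : (e a : Fin N) < v := by
        rw [← hgb]
        exact Subtype.coe_lt_coe.2 (e.lt_iff_lt.2 hab)
      have h3 := (hLv _ (hmemL a hav)).2
      show f (e a : Fin N) (e b : Fin N) = i
      rw [hgb]; exact h3
lemma fiber_bound {N c M : ℕ} (f : Fin N → Fin N → Fin c) (A : Finset (Fin N)) (T : Finset (Fin c))
    (hAr : ∀ v ∈ A, ∀ i ∈ T, (Finset.univ.filter fun w => v < w ∧ f v w = i).card ≤ M)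
    (hAl : ∀ v ∈ A, ∀ i, i ∉ T → (Finset.univ.filter fun u => u < v ∧ f u v = i).card ≤ M) :
    A.card ≤ 2 * c * M + 1 := by
  classical
  set n := A.card with hn
  set P := (A ×ˢ A).filter (fun p => p.1 < p.2) with hP
  -- each color class of P is small
  have hQ : ∀ i : Fin c, (P.filter fun p => f p.1 p.2 = i).card ≤ M * n := by
    intro i
    set Q := P.filter fun p => f p.1 p.2 = i with hQdef
    have hQmem : ∀ p ∈ Q, p.1 ∈ A ∧ p.2 ∈ A ∧ p.1 < p.2 ∧ f p.1 p.2 = i := by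
      intro p hp
      obtain ⟨hpP, hpi⟩ := Finset.mem_filter.1 hp
      obtain ⟨hprod, hlt⟩ := Finset.mem_filter.1 hpP
      obtain ⟨h1, h2⟩ := Finset.mem_product.1 hprod
      exact ⟨h1, h2, hlt, hpi⟩
    by_cases hiT : i ∈ T
    · -- bound via first coordinate
      have h1 : Q.card ≤ M * (Q.image Prod.fst).card := by
        apply Finset.card_le_mul_card_image
        intro u hu
        obtain ⟨p, hp, hpu⟩ := Finset.mem_image.1 hu
        have huA : u ∈ A := hpu ▸ (hQmem p hp).1
        calc (Q.filter fun p => p.1 = u).card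
            ≤ (Finset.univ.filter fun w => u < w ∧ f u w = i).card := by
              apply Finset.card_le_card_of_injOn Prod.snd
              · intro q hq
                obtain ⟨hqQ, hq1⟩ := Finset.mem_filter.1 hq
                obtain ⟨_, _, hlt, hfi⟩ := hQmem q hqQ
                exact Finset.mem_filter.2 ⟨Finset.mem_univ _, by rw [← hq1]; exact ⟨hlt, hfi⟩⟩
              · intro q hq q' hq' hqq
                have h1 := (Finset.mem_filter.1 hq).2
                have h2 := (Finset.mem_filter.1 hq').2
                exact Prod.ext (h1.trans h2.symm) hqq
          _ ≤ M := hAr u huA i hiT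
      refine le_trans h1 (Nat.mul_le_mul le_rfl (le_trans (Finset.card_le_card ?_) le_rfl))
      intro u hu
      obtain ⟨p, hp, hpu⟩ := Finset.mem_image.1 hu
      exact hpu ▸ (hQmem p hp).1
    · -- bound via second coordinate
      have h1 : Q.card ≤ M * (Q.image Prod.snd).card := by
        apply Finset.card_le_mul_card_image
        intro w hw
        obtain ⟨p, hp, hpw⟩ := Finset.mem_image.1 hw
        have hwA : w ∈ A := hpw ▸ (hQmem p hp).2.1
        calc (Q.filter fun p => p.2 = w).card
            ≤ (Finset.univ.filter fun u => u < w ∧ f u w = i).card := by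
              apply Finset.card_le_card_of_injOn Prod.fst
              · intro q hq
                obtain ⟨hqQ, hq2⟩ := Finset.mem_filter.1 hq
                obtain ⟨_, _, hlt, hfi⟩ := hQmem q hqQ
                exact Finset.mem_filter.2 ⟨Finset.mem_univ _, by rw [← hq2]; exact ⟨hlt, hfi⟩⟩
              · intro q hq q' hq' hqq
                have h1 := (Finset.mem_filter.1 hq).2
                have h2 := (Finset.mem_filter.1 hq').2
                exact Prod.ext hqq (h1.trans h2.symm)
          _ ≤ M := hAl w hwA i hiT
      refine le_trans h1 (Nat.mul_le_mul le_rfl (Finset.card_le_card ?_))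
      intro w hw
      obtain ⟨p, hp, hpw⟩ := Finset.mem_image.1 hw
      exact hpw ▸ (hQmem p hp).2.1
  have hPle : P.card ≤ c * (M * n) := by
    have h1 : P.card = ∑ i ∈ (Finset.univ : Finset (Fin c)),
        (P.filter fun p => f p.1 p.2 = i).card :=
      Finset.card_eq_sum_card_fiberwise (fun p _ => Finset.mem_univ _)
    rw [h1]
    calc ∑ i ∈ (Finset.univ : Finset (Fin c)), (P.filter fun p => f p.1 p.2 = i).card
        ≤ ∑ _i ∈ (Finset.univ : Finset (Fin c)), M * n := Finset.sum_le_sum fun i _ => hQ i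
      _ = c * (M * n) := by simp [Finset.card_univ, mul_comm]
  -- lower bound: offDiag ≤ 2 * P
  have hoff : A.offDiag.card ≤ 2 * P.card := by
    have h2 : A.offDiag.card ≤ 2 * ((A.offDiag.image
        (fun p : Fin N × Fin N => if p.1 < p.2 then p else p.swap)).card) := by
      apply Finset.card_le_mul_card_image
      intro b _
      have hsub : (A.offDiag.filter fun p => (if p.1 < p.2 then p else p.swap) = b)
          ⊆ {b, b.swap} := by
        intro p hp
        obtain ⟨_, hpb⟩ := Finset.mem_filter.1 hp
        by_cases hlt : p.1 < p.2
        · rw [if_pos hlt] at hpb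
          simp [hpb]
        · rw [if_neg hlt] at hpb
          have : p = b.swap := by rw [← hpb]; simp
          simp [this]
      refine le_trans (Finset.card_le_card hsub) ?_
      refine le_trans (Finset.card_insert_le _ _) ?_
      simp
    refine le_trans h2 (Nat.mul_le_mul le_rfl (Finset.card_le_card ?_))
    intro q hq
    obtain ⟨p, hp, hpq⟩ := Finset.mem_image.1 hq
    obtain ⟨h1, h2', hne⟩ := Finset.mem_offDiag.1 hp
    rw [← hpq]
    by_cases hlt : p.1 < p.2
    · rw [if_pos hlt]
      exact Finset.mem_filter.2 ⟨Finset.mem_product.2 ⟨h1, h2'⟩, hlt⟩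
    · rw [if_neg hlt]
      have hlt2 : p.2 < p.1 := lt_of_le_of_ne (not_lt.1 hlt) (Ne.symm hne)
      exact Finset.mem_filter.2 ⟨Finset.mem_product.2 ⟨h2', h1⟩, hlt2⟩
  have hoffcard : A.offDiag.card = n * n - n := by
    rw [Finset.offDiag_card]
  -- combine
  by_contra hfin
  push_neg at hfin
  have hKn : n * n - n ≤ 2 * (c * (M * n)) := by
    rw [← hoffcard]
    exact le_trans hoff (Nat.mul_le_mul le_rfl hPle)
  have hnpos : 1 ≤ n := by omega
  have e1 : n * n - n = n * (n - 1) := by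
    have h := Nat.succ_pred_eq_of_pos hnpos
    calc n * n - n = n * ((n - 1) + 1) - n := by rw [Nat.sub_add_cancel hnpos]
      _ = n * (n - 1) + n - n := by rw [Nat.mul_succ]
      _ = n * (n - 1) := by omega
  rw [e1] at hKn
  have hn1 : 2 * c * M + 1 ≤ n - 1 := by omega
  have h4 : n * (2 * c * M + 1) ≤ 2 * (c * (M * n)) :=
    le_trans (Nat.mul_le_mul le_rfl hn1) hKn
  have h5 : 2 * (c * (M * n)) = n * (2 * c * M) := by ring
  rw [h5, Nat.mul_succ] at h4
  -- h4 : n * (2*c*M) + n ≤ n * (2*c*M)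
  have h6 : n ≤ 0 := Nat.le_of_add_le_add_left (by omega : n * (2 * c * M) + n ≤ n * (2 * c * M) + 0)
  omega
/-- there is a constant `C = C(c)` such that for all ordered stars
`S_{r_1,s_1},…,S_{r_c,s_c}` we have
`OR(S_{r_1,s_1},…,S_{r_c,s_c}) ≤ C · max{r_1,…,r_c,s_1,…,s_c}`. -/
theorem ordered_ramsey_stars_linear (c : ℕ) (hc : 0 < c) :
    ∃ C : ℕ, ∀ (r s : Fin c → ℕ), (∀ i, 0 < r i) → (∀ i, 0 < s i) →
      ∀ N : ℕ, C * (Finset.univ.sup fun i => max (r i) (s i)) ≤ N →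
        ordRamseyProp (fun i => r i + s i - 1) (fun i => ordStar (r i) (s i)) N := by
  classical
  refine ⟨2 ^ c * (2 * c + 2), ?_⟩
  intro r s hr hs N hN f
  by_contra hcon
  push_neg at hcon
  set M := Finset.univ.sup (fun i => max (r i) (s i)) with hM
  have hrM : ∀ i, r i ≤ M := fun i =>
    le_trans (le_max_left _ _) (Finset.le_sup (f := fun i => max (r i) (s i)) (Finset.mem_univ i))
  have hsM : ∀ i, s i ≤ M := fun i =>
    le_trans (le_max_right _ _) (Finset.le_sup (f := fun i => max (r i) (s i)) (Finset.mem_univ i))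
  have hM1 : 1 ≤ M := le_trans (hr ⟨0, hc⟩) (hrM ⟨0, hc⟩)
  have hnot : ∀ (v : Fin N) (i : Fin c),
      (Finset.univ.filter fun u => u < v ∧ f u v = i).card < r i - 1 ∨
      (Finset.univ.filter fun w => v < w ∧ f v w = i).card < s i - 1 := by
    intro v i
    by_contra hno
    push_neg at hno
    exact hcon i (star_copy f i (r i) (s i) (hr i) (hs i) v hno.1 hno.2)
  set τ : Fin N → Finset (Fin c) :=
    fun v => Finset.univ.filter fun i =>
      (Finset.univ.filter fun w => v < w ∧ f v w = i).card < M with hτ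
  have hτr : ∀ (v : Fin N) (i : Fin c), i ∈ τ v →
      (Finset.univ.filter fun w => v < w ∧ f v w = i).card ≤ M := by
    intro v i hi
    exact le_of_lt (Finset.mem_filter.1 hi).2
  have hτl : ∀ (v : Fin N) (i : Fin c), i ∉ τ v →
      (Finset.univ.filter fun u => u < v ∧ f u v = i).card ≤ M := by
    intro v i hi
    have hge : M ≤ (Finset.univ.filter fun w => v < w ∧ f v w = i).card := by
      by_contra h
      push_neg at h
      exact hi (Finset.mem_filter.2 ⟨Finset.mem_univ i, h⟩)
    rcases hnot v i with h | h
    · have := hrM i; omega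
    · have := hsM i; omega
  have hNle : N ≤ (2 * c * M + 1) * 2 ^ c := by
    have h1 : (Finset.univ : Finset (Fin N)).card ≤
        (2 * c * M + 1) * ((Finset.univ.image τ).card) := by
      apply Finset.card_le_mul_card_image
      intro T _
      apply fiber_bound f _ T
      · intro v hv i hi
        have hvT : τ v = T := (Finset.mem_filter.1 hv).2
        exact hτr v i (hvT ▸ hi)
      · intro v hv i hi
        have hvT : τ v = T := (Finset.mem_filter.1 hv).2
        exact hτl v i (fun h => hi (hvT ▸ h))
    have h2 : ((Finset.univ : Finset (Fin N)).image τ).card ≤ 2 ^ c := by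
      calc ((Finset.univ : Finset (Fin N)).image τ).card
          ≤ Fintype.card (Finset (Fin c)) := Finset.card_le_univ _
        _ = 2 ^ c := by simp [Fintype.card_finset]
    calc N = (Finset.univ : Finset (Fin N)).card := by simp
      _ ≤ (2 * c * M + 1) * ((Finset.univ.image τ).card) := h1
      _ ≤ (2 * c * M + 1) * 2 ^ c := Nat.mul_le_mul le_rfl h2
  have hlt : (2 * c * M + 1) * 2 ^ c < 2 ^ c * (2 * c + 2) * M := by
    have h3 : (2 * c * M + 1) * 2 ^ c = 2 ^ c * (2 * c * M + 1) := by ring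
    have h4 : 2 ^ c * (2 * c + 2) * M = 2 ^ c * (2 * c * M + 2 * M) := by ring
    rw [h3, h4]
    have hpos : 0 < 2 ^ c := Nat.pow_pos (by norm_num)
    exact Nat.mul_lt_mul_of_le_of_lt le_rfl (by omega) hpos
  omega
end

section
/- For every positive integer n > 2, the ordered Ramsey number of the alternating path satisfies OR((P_n, alt); 2) ≥ 2n − 2. -/
/-- Position (0-indexed) of the `j`-th vertex (1-indexed) of the path `P_n` in
the alternating ordering: odd-indexed vertices first in increasing order of
index, then even-indexed vertices in decreasing order of index. -/
def altPos (n j : ℕ) : ℕ := if j % 2 = 1 then (j - 1) / 2 else n - j / 2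

/-- The alternating path `(P_n, alt)`: the path `v_1 v_2 … v_n` with vertices
ordered as `v_1 < v_3 < v_5 < … < … < v_4 < v_2`. -/
def altPath (n : ℕ) : SimpleGraph (Fin n) :=
  SimpleGraph.fromRel (fun a b =>
    ∃ j : ℕ, 1 ≤ j ∧ j < n ∧ a.val = altPos n j ∧ b.val = altPos n (j + 1))

/-- If the parity of `g` along consecutive positions is constant except possibly
at one place `t`, then `g` grows at least like `2m` (minus at most `1`). -/
lemma parity_mono_gap {n N : ℕ} (g : Fin n → Fin N) (hg : StrictMono g) (t : ℕ)
    (H : ∀ m : ℕ, (h1 : m < n) → (h2 : m + 1 < n) → m ≠ t →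
      (g ⟨m, h1⟩).val % 2 = (g ⟨m+1, h2⟩).val % 2) :
    ∀ m : ℕ, (hm : m < n) → 2 * m ≤ (g ⟨m, hm⟩).val + (if t < m then 1 else 0) := by
  intro m
  induction m with
  | zero => intro hm; simp
  | succ m ih =>
    intro hm
    have h1 : m < n := by omega
    have hih := ih h1
    have hlt : (g ⟨m, h1⟩).val < (g ⟨m+1, hm⟩).val := hg (Fin.mk_lt_mk.mpr (by omega))
    by_cases hmt : m = t
    · rw [if_neg (by omega)] at hih
      rw [if_pos (by omega)]
      omega
    · have hp := H m h1 hm hmt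
      by_cases h2 : t < m
      · rw [if_pos h2] at hih; rw [if_pos (by omega)]; omega
      · rw [if_neg h2] at hih; rw [if_neg (by omega)]; omega

/-- Any monochromatic ordered copy of `altPath n` in the parity coloring forces
its last vertex to have index at least `2n - 3`. -/
lemma copy_bound {n N : ℕ} (hn : 2 < n) (col : Bool) (g : Fin n → Fin N)
    (hg : StrictMono g)
    (hcol : ∀ a b : Fin n, a < b → (altPath n).Adj a b →
      decide (((g a).val + (g b).val) % 2 = 0) = col) :
    2 * n - 3 ≤ (g ⟨n-1, by omega⟩).val := by
  have hedge : ∀ (a b : Fin n) (j : ℕ), 1 ≤ j → j < n →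
      a.val = altPos n j → b.val = altPos n (j+1) →
      (((g a).val % 2 = (g b).val % 2) ↔ col = true) := by
    intro a b j hj1 hj2 ha hb
    rcases (by omega : j % 2 = 1 ∨ j % 2 = 0) with h | h
    · have ha' : a.val = (j-1)/2 := by rw [ha, altPos, if_pos h]
      have hb' : b.val = n - (j+1)/2 := by rw [hb, altPos, if_neg (by omega)]
      have hab : a < b := by rw [Fin.lt_def, ha', hb']; omega
      have hadj : (altPath n).Adj a b := by
        simp only [altPath, SimpleGraph.fromRel_adj]
        exact ⟨hab.ne, Or.inl ⟨j, hj1, hj2, ha, hb⟩⟩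
      have hc := hcol a b hab hadj
      rw [← hc, decide_eq_true_eq]
      omega
    · have ha' : a.val = n - j/2 := by rw [ha, altPos, if_neg (by omega)]
      have hb' : b.val = (j+1-1)/2 := by rw [hb, altPos, if_pos (by omega)]
      have hab : b < a := by rw [Fin.lt_def, ha', hb']; omega
      have hadj : (altPath n).Adj b a := by
        simp only [altPath, SimpleGraph.fromRel_adj]
        exact ⟨hab.ne, Or.inr ⟨j, hj1, hj2, ha, hb⟩⟩
      have hc := hcol b a hab hadj
      rw [← hc, decide_eq_true_eq]
      omega
  set k := (n+1)/2 with hk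
  have hstep : ∀ m : ℕ, (h1 : m < n) → (h2 : m+1 < n) → m ≠ k - 1 →
      (g ⟨m, h1⟩).val % 2 = (g ⟨m+1, h2⟩).val % 2 := by
    intro m h1 h2 hm
    by_cases hcase : m + 1 < k
    · -- both positions in the first (odd-index) block
      have hmid : 2*m + 2 < n := by omega
      have he1 := hedge ⟨m, h1⟩ ⟨n - (m+1), by omega⟩ (2*m+1) (by omega) (by omega)
        (by simp only [altPos]; rw [if_pos (by omega)]; omega)
        (by simp only [altPos]; rw [if_neg (by omega)]; omega)
      have he2 := hedge ⟨n - (m+1), by omega⟩ ⟨m+1, h2⟩ (2*m+2) (by omega) (by omega)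
        (by simp only [altPos]; rw [if_neg (by omega)]; omega)
        (by simp only [altPos]; rw [if_pos (by omega)]; omega)
      cases col
      · simp only [Bool.false_eq_true, iff_false] at he1 he2; omega
      · simp only [iff_true] at he1 he2; omega
    · -- both positions in the second (even-index) block
      have hmk : k ≤ m := by omega
      have he1 := hedge ⟨m+1, h2⟩ ⟨n - m - 1, by omega⟩ (2*(n-m-1)) (by omega) (by omega)
        (by simp only [altPos]; rw [if_neg (by omega)]; omega)
        (by simp only [altPos]; rw [if_pos (by omega)]; omega)
      have he2 := hedge ⟨n - m - 1, by omega⟩ ⟨m, h1⟩ (2*(n-m)-1) (by omega) (by omega)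
        (by simp only [altPos]; rw [if_pos (by omega)]; omega)
        (by simp only [altPos]; rw [if_neg (by omega)]; omega)
      cases col
      · simp only [Bool.false_eq_true, iff_false] at he1 he2; omega
      · simp only [iff_true] at he1 he2; omega
  have hbound := parity_mono_gap g hg (k-1) hstep (n-1) (by omega)
  by_cases h : k - 1 < n - 1
  · rw [if_pos h] at hbound; omega
  · rw [if_neg h] at hbound; omega

/-- for `n > 2`, the ordered Ramsey number of the alternating path
satisfies `OR((P_n, alt); 2) ≥ 2n − 2`. -/
theorem alternating_path_lower_bound (n : ℕ) (hn : 2 < n) :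
    ∀ N : ℕ, ordRamsey2Prop (altPath n) (altPath n) N → 2 * n - 2 ≤ N := by
  intro N hN
  have h := hN (fun x y => decide ((x.val + y.val) % 2 = 0))
  have key : ∃ (col : Bool) (g : Fin n → Fin N), StrictMono g ∧ ∀ a b : Fin n, a < b →
      (altPath n).Adj a b → decide (((g a).val + (g b).val) % 2 = 0) = col := by
    rcases h with ⟨g, hg, hc⟩ | ⟨g, hg, hc⟩
    exacts [⟨true, g, hg, hc⟩, ⟨false, g, hg, hc⟩]
  obtain ⟨col, g, hg, hc⟩ := key
  have hb := copy_bound hn col g hg hc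
  have hlt := (g ⟨n-1, by omega⟩).isLt
  omega
end

section
/- For every positive integer n > 2, the ordered Ramsey number of the alternating path satisfies OR((P_n, alt); 2) ≤ (4n − 3 + sqrt(8n² − 8n − 7))/2; in particular OR((P_n, alt); 2) = O(n). -/
/-- A monochromatic "zigzag" (alternating path read in path order) of `k`
vertices in the coloring `f`: consecutive vertices nest strictly inward and
every consecutive pair is colored `c` (queried with the smaller vertex first). -/
def IsZig {N : ℕ} (f : Fin N → Fin N → Bool) (c : Bool) (z : ℕ → Fin N) (k : ℕ) : Prop :=
  2 ≤ k ∧ z 0 < z 1 ∧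
    (∀ t, t + 2 < k → (z t < z (t + 2) ∧ z (t + 2) < z (t + 1)) ∨
        (z (t + 1) < z (t + 2) ∧ z (t + 2) < z t)) ∧
    (∀ t, t + 1 < k → f (min (z t) (z (t + 1))) (max (z t) (z (t + 1))) = c)

namespace IsZig

variable {N : ℕ} {f : Fin N → Fin N → Bool} {c : Bool} {z : ℕ → Fin N} {k : ℕ}

lemma alt (hz : IsZig f c z k) :
    ∀ t, t + 1 < k → (t % 2 = 0 → z t < z (t + 1)) ∧ (t % 2 = 1 → z (t + 1) < z t) := by
  obtain ⟨hk, h01, hb, -⟩ := hz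
  intro t
  induction t with
  | zero => exact fun _ => ⟨fun _ => h01, fun h => absurd h (by decide)⟩
  | succ t ih =>
      intro h
      have hp := ih (by omega)
      have hbt := hb t (by omega)
      constructor
      · intro he
        have ht1 : t % 2 = 1 := by omega
        have := hp.2 ht1
        rcases hbt with ⟨hA, hB⟩ | ⟨hA, hB⟩
        · exact absurd (lt_trans hA hB) (lt_asymm this)
        · exact hA
      · intro ho
        have ht0 : t % 2 = 0 := by omega
        have := hp.1 ht0
        rcases hbt with ⟨hA, hB⟩ | ⟨hA, hB⟩
        · exact hB
        · exact absurd (lt_trans hA hB) (lt_asymm this)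

lemma lt (hz : IsZig f c z k) :
    ∀ s t, t < s → s < k → (t % 2 = 0 → z t < z s) ∧ (t % 2 = 1 → z s < z t) := by
  have halt := hz.alt
  obtain ⟨hk, h01, hb, -⟩ := hz
  intro s
  induction s using Nat.strong_induction_on with
  | _ s ih =>
    intro t ht hs
    rcases eq_or_lt_of_le (Nat.succ_le_of_lt ht) with he | hlt
    · rw [← he]; exact halt t (by omega)
    · -- t + 2 ≤ s
      have hbs := hb (s - 2) (by omega)
      have e1 : s - 2 + 2 = s := by omega
      have e2 : s - 2 + 1 = s - 1 := by omega
      rw [e1, e2] at hbs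
      constructor
      · intro h0
        rcases hbs with ⟨hA, hB⟩ | ⟨hA, hB⟩
        · rcases eq_or_lt_of_le (show t ≤ s - 2 by omega) with h | h
          · rw [h]; exact hA
          · exact lt_trans ((ih (s - 2) (by omega) t h (by omega)).1 h0) hA
        · exact lt_trans ((ih (s - 1) (by omega) t (by omega) (by omega)).1 h0) hA
      · intro h1
        rcases hbs with ⟨hA, hB⟩ | ⟨hA, hB⟩
        · exact lt_trans hB ((ih (s - 1) (by omega) t (by omega) (by omega)).2 h1)
        · rcases eq_or_lt_of_le (show t ≤ s - 2 by omega) with h | h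
          · rw [h]; exact hB
          · exact lt_trans hB ((ih (s - 2) (by omega) t h (by omega)).2 h1)

/-- Extending a zigzag by one more vertex strictly inside its last interval. -/
lemma extend (hz : IsZig f c z k) (w : Fin N)
    (hw : (z (k - 2) < w ∧ w < z (k - 1)) ∨ (z (k - 1) < w ∧ w < z (k - 2)))
    (he : f (min (z (k - 1)) w) (max (z (k - 1)) w) = c) :
    IsZig f c (Function.update z k w) (k + 1) := by
  obtain ⟨hk, h01, hb, hedge⟩ := hz
  have hupd : ∀ m, m < k → Function.update z k w m = z m := fun m hm =>
    Function.update_of_ne (by omega) _ _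
  refine ⟨by omega, ?_, ?_, ?_⟩
  · rw [hupd 0 (by omega), hupd 1 (by omega)]; exact h01
  · intro t ht
    rcases Nat.lt_or_ge (t + 2) k with h | h
    · rw [hupd t (by omega), hupd (t + 1) (by omega), hupd (t + 2) (by omega)]
      exact hb t h
    · have ht2 : t + 2 = k := by omega
      have et : t = k - 2 := by omega
      have et1 : t + 1 = k - 1 := by omega
      rw [ht2, et1, et, hupd (k - 2) (by omega), hupd (k - 1) (by omega),
        Function.update_self]
      exact hw
  · intro t ht
    rcases Nat.lt_or_ge (t + 1) k with h | h
    · rw [hupd t (by omega), hupd (t + 1) (by omega)]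
      exact hedge t h
    · have ht1 : t + 1 = k := by omega
      have et : t = k - 1 := by omega
      rw [ht1, et, hupd (k - 1) (by omega), Function.update_self]
      exact he

lemma last_order (hz : IsZig f c z k) :
    (k % 2 = 0 → z (k - 2) < z (k - 1)) ∧ (k % 2 = 1 → z (k - 1) < z (k - 2)) := by
  have hk := hz.1
  have h := hz.lt (k - 1) (k - 2) (by omega) (by omega)
  constructor
  · intro h0; exact h.1 (by omega)
  · intro h1; exact h.2 (by omega)

lemma last_bounds (hz : IsZig f c z k) :
    k / 2 ≤ (z (k - 1)).val ∧ (z (k - 1)).val + (k - 1) / 2 < N := by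
  have hk := hz.1
  have hlt := hz.lt
  constructor
  · -- even-indexed vertices below the last one
    have hmono : ∀ i, i < k / 2 → i ≤ (z (2 * i)).val := by
      intro i
      induction i with
      | zero => omega
      | succ i ih =>
          intro hi
          have h1 : (z (2 * i)) < (z (2 * (i + 1))) :=
            (hlt (2 * (i + 1)) (2 * i) (by omega) (by omega)).1 (by omega)
          have h2 := ih (by omega)
          have := Fin.lt_def.mp h1
          omega
    have h1 : z (2 * (k / 2 - 1)) < z (k - 1) := by
      rcases Nat.lt_or_ge (2 * (k / 2 - 1)) (k - 1) with h | h
      · exact (hlt (k - 1) (2 * (k / 2 - 1)) h (by omega)).1 (by omega)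
      · omega
    have h2 := hmono (k / 2 - 1) (by omega)
    have := Fin.lt_def.mp h1
    omega
  · -- odd-indexed vertices above the last one
    have hmono : ∀ i, i < (k - 1) / 2 → (z (2 * i + 1)).val + i < N := by
      intro i
      induction i with
      | zero => intro _; have := (z 1).isLt; omega
      | succ i ih =>
          intro hi
          have h1 : z (2 * (i + 1) + 1) < z (2 * i + 1) :=
            (hlt (2 * (i + 1) + 1) (2 * i + 1) (by omega) (by omega)).2 (by omega)
          have h2 := ih (by omega)
          have := Fin.lt_def.mp h1
          omega
    rcases Nat.eq_zero_or_pos ((k - 1) / 2) with h0 | h0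
    · have := (z (k - 1)).isLt; omega
    · have h1 : z (k - 1) < z (2 * ((k - 1) / 2 - 1) + 1) :=
        (hlt (k - 1) (2 * ((k - 1) / 2 - 1) + 1) (by omega) (by omega)).2 (by omega)
      have h2 := hmono ((k - 1) / 2 - 1) (by omega)
      have := Fin.lt_def.mp h1
      omega

end IsZig


lemma copy_of_zig {N n : ℕ} (hn : 2 < n) {f : Fin N → Fin N → Bool} {c : Bool}
    {z : ℕ → Fin N} (hz : IsZig f c z n) : hasOrdCopyB (altPath n) f c := by
  have hzlt := hz.lt
  have hidx : ∀ (x : Fin n) (j : ℕ), 1 ≤ j → j ≤ n → x.val = altPos n j →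
      (if x.val < (n + 1) / 2 then 2 * x.val else 2 * (n - x.val) - 1) = j - 1 := by
    intro x j h1 h2 hx
    unfold altPos at hx
    rcases Nat.lt_or_ge (j % 2) 1 with hp | hp
    · rw [if_neg (by omega)] at hx
      rw [if_neg (by omega)]
      omega
    · have hp1 : j % 2 = 1 := by omega
      rw [if_pos hp1] at hx
      rw [if_pos (by omega)]
      omega
  set g : Fin n → Fin N :=
    fun i => z (if i.val < (n + 1) / 2 then 2 * i.val else 2 * (n - i.val) - 1) with hgdef
  have hgx : ∀ (x : Fin n) (j : ℕ), 1 ≤ j → j ≤ n → x.val = altPos n j → g x = z (j - 1) := by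
    intro x j h1 h2 hx
    rw [hgdef]
    simp only
    rw [hidx x j h1 h2 hx]
  have hg : StrictMono g := by
    intro i1 i2 h12
    have h12' : i1.val < i2.val := h12
    have hv1 : i1.val < n := i1.isLt
    have hv2 : i2.val < n := i2.isLt
    rw [hgdef]
    simp only
    rcases Nat.lt_or_ge i1.val ((n + 1) / 2) with hc1 | hc1
    · rw [if_pos hc1]
      rcases Nat.lt_or_ge i2.val ((n + 1) / 2) with hc2 | hc2
      · rw [if_pos hc2]
        exact (hzlt (2 * i2.val) (2 * i1.val) (by omega) (by omega)).1 (by omega)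
      · rw [if_neg (by omega)]
        set v2 := 2 * (n - i2.val) - 1 with hv2def
        rcases Nat.lt_or_ge (2 * i1.val) v2 with h | h
        · exact (hzlt v2 (2 * i1.val) h (by omega)).1 (by omega)
        · have hne : 2 * i1.val ≠ v2 := by omega
          exact (hzlt (2 * i1.val) v2 (by omega) (by omega)).2 (by omega)
    · rw [if_neg (by omega)]
      rcases Nat.lt_or_ge i2.val ((n + 1) / 2) with hc2 | hc2
      · omega
      · rw [if_neg (by omega)]
        exact (hzlt (2 * (n - i1.val) - 1) (2 * (n - i2.val) - 1) (by omega) (by omega)).2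
          (by omega)
  refine ⟨g, hg, ?_⟩
  intro a b hab hadj
  rw [altPath, SimpleGraph.fromRel_adj] at hadj
  obtain ⟨hne, hrel⟩ := hadj
  have hmono : g a < g b := hg hab
  rcases hrel with ⟨j, hj1, hjn, ha, hb⟩ | ⟨j, hj1, hjn, hb, ha⟩
  · rw [hgx a j hj1 (by omega) ha, hgx b (j + 1) (by omega) (by omega) hb]
    have hedge := hz.2.2.2 (j - 1) (by omega)
    have ej : j - 1 + 1 = j := by omega
    rw [ej] at hedge
    rw [hgx a j hj1 (by omega) ha, hgx b (j + 1) (by omega) (by omega) hb] at hmono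
    have e1 : j + 1 - 1 = j := by omega
    rw [e1] at hmono ⊢
    rw [min_eq_left (le_of_lt hmono), max_eq_right (le_of_lt hmono)] at hedge
    exact hedge
  · rw [hgx a (j + 1) (by omega) (by omega) ha, hgx b j hj1 (by omega) hb]
    have hedge := hz.2.2.2 (j - 1) (by omega)
    have ej : j - 1 + 1 = j := by omega
    rw [ej] at hedge
    rw [hgx a (j + 1) (by omega) (by omega) ha, hgx b j hj1 (by omega) hb] at hmono
    have e1 : j + 1 - 1 = j := by omega
    rw [e1] at hmono ⊢
    rw [min_comm, max_comm] at hedge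
    rw [min_eq_left (le_of_lt hmono), max_eq_right (le_of_lt hmono)] at hedge
    exact hedge


/-- The set of lengths of `c`-colored zigzags ending with the pair `(u,v)`,
where `c` is the color of the pair itself. -/
def Dset {N : ℕ} (f : Fin N → Fin N → Bool) (u v : Fin N) : Set ℕ :=
  {k | ∃ z : ℕ → Fin N, IsZig f (f u v) z k ∧
    min (z (k - 2)) (z (k - 1)) = u ∧ max (z (k - 2)) (z (k - 1)) = v}

noncomputable def Lpair {N : ℕ} (f : Fin N → Fin N → Bool) (u v : Fin N) : ℕ :=
  sSup (Dset f u v)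

lemma two_mem_Dset {N : ℕ} (f : Fin N → Fin N → Bool) {u v : Fin N} (huv : u < v) :
    2 ∈ Dset f u v := by
  refine ⟨fun t => if t = 0 then u else v, ⟨le_refl 2, ?_, ?_, ?_⟩, ?_, ?_⟩
  · simpa using huv
  · intro t ht; omega
  · intro t ht
    have ht0 : t = 0 := by omega
    subst ht0
    simp [min_eq_left huv.le, max_eq_right huv.le]
  · simpa using min_eq_left huv.le
  · simpa using max_eq_right huv.le

lemma Dset_bddAbove {N n : ℕ} (f : Fin N → Fin N → Bool)
    (hno : ∀ (c : Bool) (z : ℕ → Fin N) (k : ℕ), IsZig f c z k → k < n) (u v : Fin N) :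
    BddAbove (Dset f u v) :=
  ⟨n, fun m hm => by obtain ⟨zz, hzz, -, -⟩ := hm; exact le_of_lt (hno _ zz m hzz)⟩

lemma fiber_bound_s10 {N n : ℕ} (hn : 2 < n) (f : Fin N → Fin N → Bool)
    (hno : ∀ (c : Bool) (z : ℕ → Fin N) (k : ℕ), IsZig f c z k → k < n)
    (b : Bool × ℕ) (hk2 : 2 ≤ b.2) (hkN : b.2 ≤ N) :
    (Finset.filter (fun p => (f p.1 p.2, Lpair f p.1 p.2) = b)
      (Finset.filter (fun p : Fin N × Fin N => p.1 < p.2) Finset.univ)).card + (b.2 - 1) ≤ N := by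
  classical
  obtain ⟨c, k⟩ := b
  simp only at hk2 hkN
  set F := (Finset.filter (fun p => (f p.1 p.2, Lpair f p.1 p.2) = (c, k))
      (Finset.filter (fun p : Fin N × Fin N => p.1 < p.2) Finset.univ)) with hF
  have hmemF : ∀ p ∈ F, p.1 < p.2 ∧ f p.1 p.2 = c ∧ Lpair f p.1 p.2 = k := by
    intro p hp
    rw [hF, Finset.mem_filter, Finset.mem_filter] at hp
    obtain ⟨⟨-, h1⟩, h2⟩ := hp
    rw [Prod.mk.injEq] at h2
    exact ⟨h1, h2.1, h2.2⟩
  have hrealize : ∀ p ∈ F, ∃ zz : ℕ → Fin N, IsZig f c zz k ∧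
      min (zz (k - 2)) (zz (k - 1)) = p.1 ∧ max (zz (k - 2)) (zz (k - 1)) = p.2 := by
    intro p hp
    obtain ⟨hlt, hc, hL⟩ := hmemF p hp
    have hmem : Lpair f p.1 p.2 ∈ Dset f p.1 p.2 :=
      Nat.sSup_mem ⟨2, two_mem_Dset f hlt⟩ (Dset_bddAbove f hno _ _)
    rw [hL] at hmem
    obtain ⟨zz, hzz, h1, h2⟩ := hmem
    rw [hc] at hzz
    exact ⟨zz, hzz, h1, h2⟩
  have hactz : ∀ p ∈ F, ∃ zz : ℕ → Fin N, IsZig f c zz k ∧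
      zz (k - 1) = (if k % 2 = 0 then p.2 else p.1) ∧
      zz (k - 2) = (if k % 2 = 0 then p.1 else p.2) := by
    intro p hp
    obtain ⟨zz, hzz, hmin, hmax⟩ := hrealize p hp
    rcases Nat.lt_or_ge (k % 2) 1 with h0 | h1
    · have hk0 : k % 2 = 0 := by omega
      have hord := hzz.last_order.1 hk0
      rw [min_eq_left hord.le] at hmin
      rw [max_eq_right hord.le] at hmax
      exact ⟨zz, hzz, by rw [if_pos hk0]; exact hmax, by rw [if_pos hk0]; exact hmin⟩
    · have hk1 : k % 2 = 1 := by omega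
      have hord := hzz.last_order.2 hk1
      rw [min_eq_right hord.le] at hmin
      rw [max_eq_left hord.le] at hmax
      exact ⟨zz, hzz, by rw [if_neg (by omega)]; exact hmin,
        by rw [if_neg (by omega)]; exact hmax⟩
  -- the key extension argument
  have hkeyE : k % 2 = 0 → ∀ p ∈ F, ∀ q ∈ F, p.2 = q.2 → p.1 < q.1 → False := by
    intro hk0 p hp q hq he hlt
    obtain ⟨zz, hzz, hz1, hz2⟩ := hactz p hp
    rw [if_pos hk0] at hz1 hz2
    obtain ⟨hltq, hcq, hLq⟩ := hmemF q hq
    have hwlt1 : zz (k - 2) < q.1 := by rw [hz2]; exact hlt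
    have hwlt2 : q.1 < zz (k - 1) := by rw [hz1, he]; exact hltq
    have hedge : f (min (zz (k - 1)) q.1) (max (zz (k - 1)) q.1) = c := by
      rw [min_eq_right hwlt2.le, max_eq_left hwlt2.le, hz1, he]
      exact hcq
    have hext := hzz.extend q.1 (Or.inl ⟨hwlt1, hwlt2⟩) hedge
    have hmem : (k + 1) ∈ Dset f q.1 q.2 := by
      refine ⟨Function.update zz k q.1, by rwa [hcq], ?_, ?_⟩
      · have e1 : k + 1 - 2 = k - 1 := by omega
        have e2 : k + 1 - 1 = k := by omega
        rw [e1, e2, Function.update_self,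
          Function.update_of_ne (by omega : k - 1 ≠ k), hz1, he]
        exact min_eq_right hltq.le
      · have e1 : k + 1 - 2 = k - 1 := by omega
        have e2 : k + 1 - 1 = k := by omega
        rw [e1, e2, Function.update_self,
          Function.update_of_ne (by omega : k - 1 ≠ k), hz1, he]
        exact max_eq_left hltq.le
    have := le_csSup (Dset_bddAbove f hno q.1 q.2) hmem
    rw [show sSup (Dset f q.1 q.2) = Lpair f q.1 q.2 from rfl, hLq] at this
    omega
  have hkeyO : k % 2 = 1 → ∀ p ∈ F, ∀ q ∈ F, p.1 = q.1 → q.2 < p.2 → False := by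
    intro hk1 p hp q hq he hlt
    obtain ⟨zz, hzz, hz1, hz2⟩ := hactz p hp
    rw [if_neg (by omega)] at hz1 hz2
    obtain ⟨hltq, hcq, hLq⟩ := hmemF q hq
    have hwlt1 : zz (k - 1) < q.2 := by rw [hz1, he]; exact hltq
    have hwlt2 : q.2 < zz (k - 2) := by rw [hz2]; exact hlt
    have hedge : f (min (zz (k - 1)) q.2) (max (zz (k - 1)) q.2) = c := by
      rw [min_eq_left hwlt1.le, max_eq_right hwlt1.le, hz1, he]
      exact hcq
    have hext := hzz.extend q.2 (Or.inr ⟨hwlt1, hwlt2⟩) hedge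
    have hmem : (k + 1) ∈ Dset f q.1 q.2 := by
      refine ⟨Function.update zz k q.2, by rwa [hcq], ?_, ?_⟩
      · have e1 : k + 1 - 2 = k - 1 := by omega
        have e2 : k + 1 - 1 = k := by omega
        rw [e1, e2, Function.update_self,
          Function.update_of_ne (by omega : k - 1 ≠ k), hz1, he]
        exact min_eq_left hltq.le
      · have e1 : k + 1 - 2 = k - 1 := by omega
        have e2 : k + 1 - 1 = k := by omega
        rw [e1, e2, Function.update_self,
          Function.update_of_ne (by omega : k - 1 ≠ k), hz1, he]
        exact max_eq_right hltq.le
    have := le_csSup (Dset_bddAbove f hno q.1 q.2) hmem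
    rw [show sSup (Dset f q.1 q.2) = Lpair f q.1 q.2 from rfl, hLq] at this
    omega
  -- inject into the set of admissible "active" vertices
  set A := Finset.filter (fun a : Fin N => k / 2 ≤ a.val ∧ a.val + (k - 1) / 2 < N)
    Finset.univ with hA
  have hcardF : F.card ≤ A.card := by
    apply Finset.card_le_card_of_injOn (fun p => if k % 2 = 0 then p.2 else p.1)
    · intro p hp
      obtain ⟨zz, hzz, hz1, -⟩ := hactz p hp
      have hb := hzz.last_bounds
      rw [hz1] at hb
      rw [hA, Finset.mem_coe, Finset.mem_filter]
      exact ⟨Finset.mem_univ _, hb⟩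
    · intro p hp q hq hpq
      simp only at hpq
      rcases Nat.lt_or_ge (k % 2) 1 with h0 | h1
      · have hk0 : k % 2 = 0 := by omega
        rw [if_pos hk0, if_pos hk0] at hpq
        rcases lt_trichotomy p.1 q.1 with h | h | h
        · exact absurd (hkeyE hk0 p hp q hq hpq h) (fun x => x)
        · exact Prod.ext h hpq
        · exact absurd (hkeyE hk0 q hq p hp hpq.symm h) (fun x => x)
      · have hk1 : k % 2 = 1 := by omega
        rw [if_neg (by omega), if_neg (by omega)] at hpq
        rcases lt_trichotomy p.2 q.2 with h | h | h
        · exact absurd (hkeyO hk1 q hq p hp hpq.symm h) (fun x => x)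
        · exact Prod.ext hpq h
        · exact absurd (hkeyO hk1 p hp q hq hpq h) (fun x => x)
  have hcardA : A.card + (k - 1) ≤ N := by
    have h1 : A.card ≤ (Finset.range (N - (k - 1))).card := by
      apply Finset.card_le_card_of_injOn (fun a => a.val - k / 2)
      · intro a ha
        rw [hA, Finset.mem_coe, Finset.mem_filter] at ha
        rw [Finset.mem_coe, Finset.mem_range]
        simp only
        omega
      · intro a ha b hb hab
        have ha' : a ∈ A := ha
        have hb' : b ∈ A := hb
        rw [hA, Finset.mem_filter] at ha' hb'
        simp only at hab
        obtain ⟨-, ha2, ha3⟩ := ha'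
        obtain ⟨-, hb2, hb3⟩ := hb'
        exact Fin.ext (by omega)
    rw [Finset.card_range] at h1
    omega
  omega

lemma gaussIcc : ∀ m : ℕ, (∑ k ∈ Finset.Icc 2 (m + 1), (k - 1)) * 2 = (m + 1) * m := by
  intro m
  induction m with
  | zero => decide
  | succ m ih =>
      rw [Finset.sum_Icc_succ_top (by omega : 2 ≤ m + 1 + 1), add_mul, ih]
      have e : m + 1 + 1 - 1 = m + 1 := by omega
      rw [e]
      ring


/-- for `n > 2`, the ordered Ramsey number of the alternating path
satisfies `OR((P_n, alt); 2) ≤ (4n − 3 + √(8n² − 8n − 7))/2`. -/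
theorem alternating_path_upper_bound (n : ℕ) (hn : 2 < n) :
    ∀ N : ℕ, (4 * (n : ℝ) - 3 + Real.sqrt (8 * (n : ℝ) ^ 2 - 8 * n - 7)) / 2 ≤ N →
      ordRamsey2Prop (altPath n) (altPath n) N := by
  obtain ⟨m, rfl⟩ : ∃ m, n = m + 3 := ⟨n - 3, by omega⟩
  set n := m + 3 with hndef
  intro N hle f
  by_contra hcon
  push_neg at hcon
  obtain ⟨hred, hblue⟩ := hcon
  classical
  -- basic numeric facts
  have hsnn : 0 ≤ Real.sqrt (8 * (n : ℝ) ^ 2 - 8 * n - 7) := Real.sqrt_nonneg _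
  have hnR : (3 : ℝ) ≤ (n : ℝ) := by exact_mod_cast (by omega : 3 ≤ n)
  have hNbig : 2 * n ≤ N + 1 := by
    by_contra hN
    push_neg at hN
    have h1 : (N : ℝ) + 2 ≤ 2 * (n : ℝ) := by exact_mod_cast (by omega : N + 2 ≤ 2 * n)
    have h2 : (4 * (n : ℝ) - 3) / 2 ≤ N := by
      calc (4 * (n : ℝ) - 3) / 2 ≤ (4 * (n : ℝ) - 3 + Real.sqrt (8 * (n : ℝ) ^ 2 - 8 * n - 7)) / 2 := by
            linarith
        _ ≤ N := hle
    linarith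
  -- no zigzag has n or more vertices
  have hno : ∀ (c : Bool) (z : ℕ → Fin N) (k : ℕ), IsZig f c z k → k < n := by
    intro c z k hzk
    by_contra hge
    push_neg at hge
    have hzn : IsZig f c z n := ⟨by omega, hzk.2.1,
      fun t ht => hzk.2.2.1 t (by omega), fun t ht => hzk.2.2.2 t (by omega)⟩
    have hc := copy_of_zig hn hzn
    cases c
    · exact hblue hc
    · exact hred hc
  -- double counting
  set P := Finset.filter (fun p : Fin N × Fin N => p.1 < p.2) Finset.univ with hP
  set T := (Finset.univ : Finset Bool) ×ˢ Finset.Icc 2 (n - 1) with hT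
  have hmap : ∀ p ∈ P, (f p.1 p.2, Lpair f p.1 p.2) ∈ T := by
    intro p hp
    have hp' : p.1 < p.2 := by
      rw [hP, Finset.mem_filter] at hp
      exact hp.2
    have h2 : 2 ∈ Dset f p.1 p.2 := two_mem_Dset f hp'
    have hbdd := Dset_bddAbove f hno p.1 p.2
    have hL2 : 2 ≤ Lpair f p.1 p.2 := le_csSup hbdd h2
    have hLmem : Lpair f p.1 p.2 ∈ Dset f p.1 p.2 := Nat.sSup_mem ⟨2, h2⟩ hbdd
    have hLn : Lpair f p.1 p.2 < n := by
      obtain ⟨zz, hzz, -, -⟩ := hLmem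
      exact hno _ zz _ hzz
    rw [hT, Finset.mem_product]
    exact ⟨Finset.mem_univ _, Finset.mem_Icc.2 ⟨hL2, by omega⟩⟩
  have hcards := Finset.card_eq_sum_card_fiberwise hmap
  have hbound : ∀ b ∈ T, (Finset.filter (fun p => (f p.1 p.2, Lpair f p.1 p.2) = b) P).card
      + (b.2 - 1) ≤ N := by
    intro b hb
    rw [hT, Finset.mem_product, Finset.mem_Icc] at hb
    exact fiber_bound_s10 hn f hno b hb.2.1 (by omega)
  have hsum_le : P.card + ∑ b ∈ T, (b.2 - 1) ≤ T.card * N := by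
    calc P.card + ∑ b ∈ T, (b.2 - 1)
        = ∑ b ∈ T, ((Finset.filter (fun p => (f p.1 p.2, Lpair f p.1 p.2) = b) P).card
            + (b.2 - 1)) := by rw [Finset.sum_add_distrib, ← hcards]
      _ ≤ ∑ _b ∈ T, N := Finset.sum_le_sum hbound
      _ = T.card * N := by rw [Finset.sum_const, smul_eq_mul]
  have hTcard : T.card = 2 * (n - 2) := by
    rw [hT, Finset.card_product, Nat.card_Icc]
    simp [Finset.card_univ]
    omega
  -- value of the sum over T
  have hG : (∑ y ∈ Finset.Icc 2 (n - 1), (y - 1)) * 2 = (n - 1) * (n - 2) := by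
    have e : n - 1 = (n - 2) + 1 := by omega
    rw [e]
    exact gaussIcc (n - 2)
  have hsumT : (∑ b ∈ T, (b.2 - 1)) * 2 = 2 * ((n - 1) * (n - 2)) := by
    rw [hT, Finset.sum_product, Fintype.sum_bool]
    show ((∑ y ∈ Finset.Icc 2 (n - 1), (y - 1)) + ∑ y ∈ Finset.Icc 2 (n - 1), (y - 1)) * 2
      = 2 * ((n - 1) * (n - 2))
    omega
  -- value of P.card
  have hPcard : 2 * P.card + N = N * N := by
    have h1 : P.card = ∑ v : Fin N, (Finset.filter (fun p : Fin N × Fin N => p.2 = v) P).card :=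
      Finset.card_eq_sum_card_fiberwise (fun p _ => Finset.mem_univ _)
    have h2 : ∀ v : Fin N, (Finset.filter (fun p : Fin N × Fin N => p.2 = v) P).card = v.val := by
      intro v
      have heq : Finset.filter (fun p : Fin N × Fin N => p.2 = v) P
          = (Finset.Iio v).image (fun u => (u, v)) := by
        ext p
        simp only [hP, Finset.mem_filter, Finset.mem_univ, true_and, Finset.mem_image,
          Finset.mem_Iio]
        constructor
        · rintro ⟨h1, h2⟩
          exact ⟨p.1, by rw [← h2]; exact h1, by rw [← h2]⟩
        · rintro ⟨u, hu, rfl⟩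
          exact ⟨hu, rfl⟩
      rw [heq, Finset.card_image_of_injective _ (fun a b hab => by
        simpa using congrArg Prod.fst hab), Fin.card_Iio]
    rw [h1]
    have h3 : ∑ v : Fin N, (Finset.filter (fun p : Fin N × Fin N => p.2 = v) P).card
        = ∑ i ∈ Finset.range N, i := by
      rw [Finset.sum_congr rfl (fun v _ => h2 v)]
      exact Fin.sum_univ_eq_sum_range (fun i => i) N
    rw [h3]
    have h4 := Finset.sum_range_id_mul_two N
    cases N with
    | zero => simp
    | succ M =>
        have h5 : (∑ i ∈ Finset.range (M + 1), i) * 2 = (M + 1) * M := by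
          rw [h4]; simp
        have h6 : (M + 1) * M + (M + 1) = (M + 1) * (M + 1) := by ring
        omega
  -- cast to ℝ and contradict
  have hc1 : (2 : ℝ) * P.card + N = N * N := by exact_mod_cast hPcard
  have hc2 : ((∑ b ∈ T, (b.2 - 1) : ℕ) : ℝ) * 2 = 2 * (((m : ℝ) + 2) * ((m : ℝ) + 1)) := by
    have e1 : n - 1 = m + 2 := by omega
    have e2 : n - 2 = m + 1 := by omega
    rw [e1, e2] at hsumT
    exact_mod_cast hsumT
  have hc3 : (P.card : ℝ) + ((∑ b ∈ T, (b.2 - 1) : ℕ) : ℝ) ≤ 2 * ((m : ℝ) + 1) * N := by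
    have e2 : n - 2 = m + 1 := by omega
    rw [hTcard, e2] at hsum_le
    exact_mod_cast hsum_le
  have hstar : (N : ℝ) * N - N + 2 * (((m : ℝ) + 2) * ((m : ℝ) + 1)) ≤ 4 * ((m : ℝ) + 1) * N := by
    linarith
  -- quadratic inequality from the square root hypothesis
  have harg : (0 : ℝ) ≤ 8 * (n : ℝ) ^ 2 - 8 * n - 7 := by
    linarith [sq_nonneg ((n : ℝ) - 3), hnR]
  have hs2 : Real.sqrt (8 * (n : ℝ) ^ 2 - 8 * n - 7) ^ 2 = 8 * (n : ℝ) ^ 2 - 8 * n - 7 :=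
    Real.sq_sqrt harg
  set s := Real.sqrt (8 * (n : ℝ) ^ 2 - 8 * n - 7) with hs
  have e1 : 0 ≤ 2 * (N : ℝ) - 4 * n + 3 - s := by linarith
  have e2 : 0 ≤ 2 * (N : ℝ) - 4 * n + 3 + s := by linarith
  have e3 : s ^ 2 ≤ (2 * (N : ℝ) - 4 * n + 3) ^ 2 := by linarith [mul_nonneg e1 e2]
  have e4 : 8 * (n : ℝ) ^ 2 - 8 * n - 7 ≤ (2 * (N : ℝ) - 4 * n + 3) ^ 2 := by
    rw [← hs2]; exact e3
  have hcast : (n : ℝ) = (m : ℝ) + 3 := by rw [hndef]; push_cast; ring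
  rw [hcast] at e4
  have hle' : 2 * (m : ℝ) + 4.5 ≤ (N : ℝ) := by
    rw [hcast] at hle
    linarith
  linarith [hstar, e4, hle']
end

section
/- For integers r, s ≥ 2, the ordered Ramsey number of monotone cycles satisfies the upper bound OR((C_r, mon), (C_s, mon)) ≤ 2rs − 3r − 3s + 6. -/
/-- The monotone cycle `(C_n, mon)` on vertices `v_0 < v_1 < … < v_{n-1}`:
the monotone path edges together with the edge `{v_0, v_{n-1}}`. -/
def monCycle (n : ℕ) : SimpleGraph (Fin n) :=
  SimpleGraph.fromRel (fun a b => a.val + 1 = b.val ∨ (a.val = 0 ∧ b.val = n - 1))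

def chainLen {N : ℕ} (f : Fin N → Fin N → Bool) (c : Bool) (v : Fin N) : ℕ :=
  ((Finset.univ.filter (fun u => u < v ∧ f u v = c)).attach.sup
    (fun u => chainLen f c u.1)) + 1
termination_by v.val
decreasing_by
  have := u.2
  simp only [Finset.mem_filter] at this
  exact this.2.1

lemma chainLen_pos {N : ℕ} (f : Fin N → Fin N → Bool) (c : Bool) (v : Fin N) :
    1 ≤ chainLen f c v := by
  rw [chainLen]; omega

lemma chainLen_lt {N : ℕ} (f : Fin N → Fin N → Bool) (c : Bool) {u v : Fin N}
    (huv : u < v) (hc : f u v = c) : chainLen f c u < chainLen f c v := by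
  conv_rhs => rw [chainLen]
  have hu : u ∈ Finset.univ.filter (fun u => u < v ∧ f u v = c) := by
    simp [huv, hc]
  have := Finset.le_sup (f := fun u => chainLen f c u.1)
    (Finset.mem_attach _ (⟨u, hu⟩ : {x // x ∈ Finset.univ.filter (fun u => u < v ∧ f u v = c)}))
  simp only at this
  omega

lemma chainLen_path {N : ℕ} (f : Fin N → Fin N → Bool) (c : Bool) (v : Fin N) :
    ∃ g : ℕ → Fin N,
      (∀ i j, i < j → j < chainLen f c v → g i < g j) ∧
      (∀ i, i + 1 < chainLen f c v → f (g i) (g (i+1)) = c) ∧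
      (∀ i, i < chainLen f c v → g i ≤ v) ∧
      g (chainLen f c v - 1) = v := by
  induction v using WellFoundedLT.induction with
  | _ v ih =>
  set S := Finset.univ.filter (fun u => u < v ∧ f u v = c) with hS
  by_cases hne : S.Nonempty
  · obtain ⟨u, hu, hsup⟩ := Finset.exists_mem_eq_sup S.attach (hne.attach)
      (fun u => chainLen f c u.1)
    have hlen : chainLen f c v = chainLen f c u.1 + 1 := by
      rw [chainLen, ← hS, hsup]
    have huv : u.1 < v ∧ f u.1 v = c := by
      have := u.2; simp only [hS, Finset.mem_filter] at this; exact this.2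
    obtain ⟨g, hmono, hedge, hle, hlast⟩ := ih u.1 huv.1
    set L := chainLen f c u.1 with hL
    have hLpos := chainLen_pos f c u.1
    refine ⟨fun i => if i < L then g i else v, ?_, ?_, ?_, ?_⟩
    · intro i j hij hjlen
      rw [hlen] at hjlen
      by_cases hj : j < L
      · simp only [if_pos (lt_trans hij hj), if_pos hj]
        exact hmono i j hij hj
      · have : j = L := by omega
        simp only [if_pos (by omega : i < L), if_neg hj]
        exact lt_of_le_of_lt (hle i (by omega)) huv.1
    · intro i hi
      rw [hlen] at hi
      by_cases h1 : i + 1 < L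
      · simp only [if_pos (by omega : i < L), if_pos h1]
        exact hedge i h1
      · have hi1 : i + 1 = L := by omega
        simp only [if_pos (by omega : i < L), if_neg (by omega : ¬ i + 1 < L)]
        have : g i = u.1 := by rw [← hlast]; congr 1; omega
        rw [this]; exact huv.2
    · intro i hi
      by_cases h : i < L
      · simp only [if_pos h]; exact le_of_lt (lt_of_le_of_lt (hle i h) huv.1)
      · simp [h]
    · have : chainLen f c v - 1 = L := by omega
      rw [this]; simp
  · have hlen : chainLen f c v = 1 := by
      rw [chainLen, ← hS]
      rw [Finset.not_nonempty_iff_eq_empty] at hne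
      simp [hne]
    exact ⟨fun _ => v, by omega, by omega, fun i _ => le_refl v, by rw [hlen]⟩

lemma path_or_cycle (p s N : ℕ) (hs : 2 ≤ s) (hN : (p-1)*(s-1)+1 ≤ N)
    (f : Fin N → Fin N → Bool) (c : Bool) :
    (∃ g : Fin p → Fin N, StrictMono g ∧
      ∀ i : ℕ, ∀ h : i + 1 < p, f (g ⟨i, by omega⟩) (g ⟨i+1, h⟩) = c) ∨
    hasOrdCopyB (monCycle s) f (!c) := by
  by_cases hex : ∃ v : Fin N, p ≤ chainLen f c v
  · -- long chain: extract a c-colored monotone path on p vertices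
    left
    obtain ⟨v, hv⟩ := hex
    obtain ⟨g, hmono, hedge, -, -⟩ := chainLen_path f c v
    set L := chainLen f c v with hL
    refine ⟨fun i => g (L - p + i.val), ?_, ?_⟩
    · intro i j hij
      exact hmono _ _ (by omega) (by omega)
    · intro i h
      have : L - p + (i+1) = (L - p + i) + 1 := by omega
      simp only [this]
      exact hedge _ (by omega)
  · -- all chains short: pigeonhole into s-sized monochromatic (!c) set
    right
    push_neg at hex
    have hN1 : 1 ≤ N := by omega
    have hp : ∀ v : Fin N, chainLen f c v ∈ Finset.Icc 1 (p-1) := by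
      intro v
      have h1 := chainLen_pos f c v
      have h2 := hex v
      simp only [Finset.mem_Icc]; omega
    have hcard : (Finset.Icc 1 (p-1)).card * (s-1) < (Finset.univ : Finset (Fin N)).card := by
      rw [Nat.card_Icc, Finset.card_univ, Fintype.card_fin]
      have : p - 1 + 1 - 1 = p - 1 := by omega
      rw [this]; omega
    obtain ⟨y, -, hy⟩ := Finset.exists_lt_card_fiber_of_mul_lt_card_of_maps_to
      (fun v _ => hp v) hcard
    set T := Finset.univ.filter (fun v => chainLen f c v = y) with hT
    obtain ⟨T', hT'sub, hT'card⟩ := Finset.exists_subset_card_eq (by omega : s ≤ T.card)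
    set e := T'.orderIsoOfFin hT'card with he
    refine ⟨fun i => (e i : Fin N), ?_, ?_⟩
    · intro i j hij
      exact Subtype.coe_lt_coe.2 (e.lt_iff_lt.2 hij)
    · intro a b hab _
      have hlt : (e a : Fin N) < (e b : Fin N) := Subtype.coe_lt_coe.2 (e.lt_iff_lt.2 hab)
      have hmem : ∀ x : Fin s, chainLen f c (e x : Fin N) = y := by
        intro x
        have := hT'sub (e x).2
        simp only [hT, Finset.mem_filter] at this
        exact this.2
      by_contra hcon
      have hfc : f (e a : Fin N) (e b : Fin N) = c := by
        cases hfab : f (e a : Fin N) (e b : Fin N) <;> cases c <;> simp_all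
      have := chainLen_lt f c hlt hfc
      rw [hmem a, hmem b] at this
      omega

lemma copy_comp {n N M : ℕ} (G : SimpleGraph (Fin n)) (f : Fin N → Fin N → Bool)
    (e : Fin M → Fin N) (he : StrictMono e) (col : Bool)
    (h : hasOrdCopyB G (fun i j => f (e i) (e j)) col) : hasOrdCopyB G f col := by
  obtain ⟨g, hg, hcol⟩ := h
  exact ⟨e ∘ g, he.comp hg, fun a b hab hadj => hcol a b hab hadj⟩

lemma key (p s N : ℕ) (hp : 1 ≤ p) (hs : 2 ≤ s) (f : Fin N → Fin N → Bool) (c : Bool)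
    (v₀ : Fin N) (S : Finset (Fin N)) (hcard : (p-1)*(s-1)+1 ≤ S.card)
    (hv : ∀ x ∈ S, v₀ < x ∧ f v₀ x = c) :
    hasOrdCopyB (monCycle (p+1)) f c ∨ hasOrdCopyB (monCycle s) f (!c) := by
  set e := S.orderIsoOfFin rfl with he
  set eN : Fin S.card → Fin N := fun i => (e i : Fin N) with heN
  have heNmono : StrictMono eN := fun i j hij => Subtype.coe_lt_coe.2 (e.lt_iff_lt.2 hij)
  have heNmem : ∀ i, eN i ∈ S := fun i => (e i).2
  rcases path_or_cycle p s S.card hs hcard (fun i j => f (eN i) (eN j)) c with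
    ⟨g, hg, hedge⟩ | hcyc
  · left
    refine ⟨fun i => if h : i.val = 0 then v₀ else eN (g ⟨i.val - 1, by omega⟩), ?_, ?_⟩
    · intro i j hij
      have hij' : i.val < j.val := hij
      by_cases hi : i.val = 0
      · simp only [dif_pos hi, dif_neg (by omega : ¬ j.val = 0)]
        exact (hv _ (heNmem _)).1
      · simp only [dif_neg hi, dif_neg (by omega : ¬ j.val = 0)]
        exact heNmono (hg (by simp only [Fin.mk_lt_mk]; omega))
    · intro a b hab hadj
      have hab' : a.val < b.val := hab
      simp only [monCycle, SimpleGraph.fromRel_adj] at hadj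
      have hbb : b.val < p + 1 := b.isLt
      have hedge' : a.val + 1 = b.val ∨ (a.val = 0 ∧ b.val = p) := by omega
      by_cases ha : a.val = 0
      · simp only [dif_pos ha, dif_neg (by omega : ¬ b.val = 0)]
        exact (hv _ (heNmem _)).2
      · have hcons : a.val + 1 = b.val := by omega
        simp only [dif_neg ha, dif_neg (by omega : ¬ b.val = 0)]
        have h1 : (a.val - 1) + 1 < p := by omega
        have := hedge (a.val - 1) h1
        have e1 : (⟨b.val - 1, by omega⟩ : Fin p) = ⟨a.val - 1 + 1, h1⟩ := by
          simp only [Fin.mk.injEq]; omega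
        rw [e1]
        exact this
  · right
    exact copy_comp _ f eN heNmono _ hcyc

/-- for `r, s ≥ 2`,
`OR((C_r, mon), (C_s, mon)) ≤ 2rs − 3r − 3s + 6`. -/
theorem ordered_ramsey_monotone_cycles_upper (r s : ℕ) (hr : 2 ≤ r) (hs : 2 ≤ s) :
    ∀ N : ℕ, 2 * r * s + 6 - 3 * r - 3 * s ≤ N →
      ordRamsey2Prop (monCycle r) (monCycle s) N := by
  obtain ⟨a, rfl⟩ : ∃ a, r = a + 2 := ⟨r - 2, by omega⟩
  obtain ⟨b, rfl⟩ : ∃ b, s = b + 2 := ⟨s - 2, by omega⟩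
  intro N hN f
  obtain ⟨m, hm⟩ : ∃ m, a * b = m := ⟨_, rfl⟩
  have h1 : 2 * (a+2) * (b+2) = 2*m + 4*a + 4*b + 8 := by rw [← hm]; ring
  have h2 : a * (b+1) = m + a := by rw [← hm]; ring
  have h3 : b * (a+1) = m + b := by rw [← hm]; ring
  have hN2 : 2 ≤ N := by omega
  set v₀ : Fin N := ⟨0, by omega⟩ with hv₀
  have hval : v₀.val = 0 := rfl
  have hPcard : (Finset.univ.filter (fun x : Fin N => v₀ < x)).card = N - 1 := by
    have heq : Finset.univ.filter (fun x : Fin N => v₀ < x) = Finset.univ.erase v₀ := by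
      ext x
      simp only [Finset.mem_filter, Finset.mem_univ, true_and, Finset.mem_erase, and_true,
        Fin.lt_def, Fin.ext_iff]
      omega
    rw [heq, Finset.card_erase_of_mem (Finset.mem_univ _), Finset.card_univ, Fintype.card_fin]
  set R := Finset.univ.filter (fun x : Fin N => v₀ < x ∧ f v₀ x = true) with hR
  set B := Finset.univ.filter (fun x : Fin N => v₀ < x ∧ f v₀ x = false) with hB
  have hRB : R.card + B.card = N - 1 := by
    rw [← hPcard]
    have hun : R ∪ B = Finset.univ.filter (fun x : Fin N => v₀ < x) := by
      ext x
      simp only [Finset.mem_union, Finset.mem_filter, Finset.mem_univ, true_and, hR, hB]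
      cases hfx : f v₀ x <;> tauto
    have hdisj : Disjoint R B := by
      rw [Finset.disjoint_left]
      intro x hx1 hx2
      rw [hR, Finset.mem_filter] at hx1
      rw [hB, Finset.mem_filter] at hx2
      simp_all
    rw [← hun, Finset.card_union_of_disjoint hdisj]
  have hsplit : m + a + 1 ≤ R.card ∨ m + b + 1 ≤ B.card := by omega
  rcases hsplit with hc | hc
  · have hkey := key (a+1) (b+2) N (by omega) (by omega) f true v₀ R
      (by simpa [h2] using hc)
      (by intro x hx; simpa [hR] using hx)
    simpa using hkey
  · have hkey := key (b+1) (a+2) N (by omega) (by omega) f false v₀ B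
      (by simpa [h3] using hc)
      (by intro x hx; simpa [hB] using hx)
    simp only [Bool.not_false] at hkey
    exact hkey.symm
end

section
/- Let k be a positive integer, let G be a k-degenerate ordered graph with n vertices, and let N ≥ n². Then every red/blue coloring of the edges of the ordered complete graph on N vertices contains either a blue ordered copy of G or a red copy of K_{t,t} with t = (N/n²)^{1/(k+1)}, where the red K_{t,t} has one color class of t vertices entirely to the left of the other class of t vertices, with all t² edges between them red. -/
/-- An ordered graph on `Fin n` is `k`-degenerate if there is an ordering of the
vertices (possibly different from the vertex ordering) in which every vertex has
at most `k` earlier neighbors. -/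
def IsKDegenerate (k n : ℕ) (G : SimpleGraph (Fin n)) : Prop :=
  ∃ π : Fin n ≃ Fin n, ∀ v : Fin n, {u | G.Adj u v ∧ π u < π v}.ncard ≤ k

open Finset


/-- symmetric-color helper -/
def blueB {N : ℕ} (f : Fin N → Fin N → Bool) (x y : Fin N) : Bool :=
  if x < y then f x y else if y < x then f y x else true

lemma blueB_symm {N : ℕ} (f : Fin N → Fin N → Bool) (x y : Fin N) :
    blueB f x y = blueB f y x := by
  rcases lt_trichotomy x y with h | h | h
  · simp [blueB, h, asymm h, not_lt_of_gt h]
  · simp [blueB, h]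
  · simp [blueB, h, asymm h, not_lt_of_gt h]

lemma extract {N : ℕ} (t : ℕ) (ht : 0 < t) (f : Fin N → Fin N → Bool)
    (A B : Finset (Fin N))
    (hAB : (∀ x ∈ A, ∀ y ∈ B, x < y) ∨ (∀ x ∈ A, ∀ y ∈ B, y < x))
    (hA : t ≤ A.card)
    (hbad : ∀ x ∈ A, (B.filter fun y => blueB f x y = true).card < B.card / t) :
    ∃ g₁ g₂ : Fin t → Fin N, StrictMono g₁ ∧ StrictMono g₂ ∧ (∀ a b, g₁ a < g₂ b) ∧
      ∀ a b, f (g₁ a) (g₂ b) = false := by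
  classical
  obtain ⟨A', hA'sub, hA'card⟩ := Finset.exists_subset_card_eq hA
  have hA'ne : A'.Nonempty := by rw [← Finset.card_pos, hA'card]; exact ht
  obtain ⟨x₀, hx₀⟩ := hA'ne
  have hq1 : 1 ≤ B.card / t := lt_of_le_of_lt (Nat.zero_le _) (hbad x₀ (hA'sub hx₀))
  set q := B.card / t with hq
  set B' := B.filter (fun y => ∀ x ∈ A', blueB f x y = false) with hB'
  have hsub : B \ B' ⊆ A'.biUnion (fun x => B.filter (fun y => blueB f x y = true)) := by
    intro y hy
    simp only [hB', Finset.mem_sdiff, Finset.mem_filter, not_and, not_forall] at hy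
    obtain ⟨hyB, h2⟩ := hy
    obtain ⟨x, hx, hne⟩ := h2 hyB
    simp only [Finset.mem_biUnion, Finset.mem_filter]
    exact ⟨x, hx, hyB, by simpa using hne⟩
  have hcard1 : (B \ B').card ≤ t * (q - 1) := by
    refine le_trans (card_le_card hsub) (le_trans card_biUnion_le ?_)
    have := Finset.sum_le_card_nsmul A' (fun x => (B.filter (fun y => blueB f x y = true)).card)
      (q - 1) (fun x hx => Nat.le_sub_one_of_lt (hbad x (hA'sub hx)))
    simpa [hA'card, smul_eq_mul] using this
  have hB'B : B' ⊆ B := filter_subset _ _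
  have hqt : q * t ≤ B.card := Nat.div_mul_le_self _ _
  have hcard2 : t ≤ B'.card := by
    have h := Finset.card_sdiff_add_card_eq_card hB'B
    have hmul : t * q = t * (q - 1) + t := by
      conv_lhs => rw [← Nat.sub_add_cancel hq1]
      ring
    have : t * q = q * t := mul_comm _ _
    omega
  obtain ⟨B'', hB''sub, hB''card⟩ := Finset.exists_subset_card_eq hcard2
  have hredAB : ∀ x ∈ A', ∀ y ∈ B'', blueB f x y = false :=
    fun x hx y hy => (mem_filter.1 (hB''sub hy)).2 x hx
  have hmemA : ∀ a : Fin t, ((A'.orderIsoOfFin hA'card a : { x // x ∈ A' }) : Fin N) ∈ A' :=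
    fun a => (A'.orderIsoOfFin hA'card a).2
  have hmemB : ∀ a : Fin t, ((B''.orderIsoOfFin hB''card a : { x // x ∈ B'' }) : Fin N) ∈ B'' :=
    fun a => (B''.orderIsoOfFin hB''card a).2
  have hsmA : StrictMono (fun a : Fin t => ((A'.orderIsoOfFin hA'card a : _) : Fin N)) :=
    fun a b hab => by exact_mod_cast (A'.orderIsoOfFin hA'card).lt_iff_lt.2 hab
  have hsmB : StrictMono (fun a : Fin t => ((B''.orderIsoOfFin hB''card a : _) : Fin N)) :=
    fun a b hab => by exact_mod_cast (B''.orderIsoOfFin hB''card).lt_iff_lt.2 hab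
  rcases hAB with h | h
  · refine ⟨_, _, hsmA, hsmB, fun a b => h _ (hA'sub (hmemA a)) _ (hB'B (hB''sub (hmemB b))), ?_⟩
    intro a b
    have hr := hredAB _ (hmemA a) _ (hmemB b)
    have hlt := h _ (hA'sub (hmemA a)) _ (hB'B (hB''sub (hmemB b)))
    unfold blueB at hr
    rwa [if_pos hlt] at hr
  · refine ⟨_, _, hsmB, hsmA, fun a b => h _ (hA'sub (hmemA b)) _ (hB'B (hB''sub (hmemB a))), ?_⟩
    intro a b
    have hr := hredAB _ (hmemA b) _ (hmemB a)
    have hlt := h _ (hA'sub (hmemA b)) _ (hB'B (hB''sub (hmemB a)))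
    unfold blueB at hr
    rwa [if_neg (asymm hlt), if_pos hlt] at hr

lemma main' (k n N t : ℕ) (hn : 0 < n) (ht : 0 < t)
    (G : SimpleGraph (Fin n)) (π : Fin n ≃ Fin n)
    (hdeg : ∀ v : Fin n, {u | G.Adj u v ∧ π u < π v}.ncard ≤ k)
    (hNn : n ^ 2 * t ^ (k + 1) ≤ N)
    (f : Fin N → Fin N → Bool)
    (hred : ¬ ∃ g₁ g₂ : Fin t → Fin N, StrictMono g₁ ∧ StrictMono g₂ ∧
      (∀ a b, g₁ a < g₂ b) ∧ ∀ a b, f (g₁ a) (g₂ b) = false) :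
    ∃ g : Fin n → Fin N, StrictMono g ∧
      ∀ a b : Fin n, a < b → G.Adj a b → f (g a) (g b) = true := by
  classical
  set m := N / n with hm
  have hN0 : 0 < N := lt_of_lt_of_le (by positivity) hNn
  have hmN : n * m ≤ m * n := le_of_eq (mul_comm _ _)
  have hmN' : n * m ≤ N := by
    rw [mul_comm]; exact Nat.div_mul_le_self N n
  have hm_ge : n * t ^ (k + 1) ≤ m := by
    rw [hm, Nat.le_div_iff_mul_le hn]
    calc n * t ^ (k+1) * n = n ^ 2 * t ^ (k+1) := by ring
    _ ≤ N := hNn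
  -- intervals
  set I : Fin n → Finset (Fin N) :=
    (fun i => Finset.univ.filter (fun y : Fin N => i.1 * m ≤ y.1 ∧ y.1 < i.1 * m + m)) with hI
  have hIub : ∀ i : Fin n, i.1 * m + m ≤ N := by
    intro i
    have h1 : (i.1 + 1) * m ≤ n * m := Nat.mul_le_mul_right _ i.isLt
    calc i.1 * m + m = (i.1 + 1) * m := by ring
    _ ≤ n * m := h1
    _ ≤ N := hmN'
  have hIcard : ∀ i, (I i).card = m := by
    intro i
    have : (I i).card = (Finset.Ico (i.1 * m) (i.1 * m + m)).card := by
      apply Finset.card_bij (fun (y : Fin N) _ => (y : ℕ))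
      · intro a ha
        simp only [hI, Finset.mem_filter] at ha
        simp [Finset.mem_Ico, ha.2.1, ha.2.2]
      · intro a _ b _ hab; exact Fin.ext hab
      · intro b hb
        simp only [Finset.mem_Ico] at hb
        have hbN : b < N := lt_of_lt_of_le hb.2 (hIub i)
        exact ⟨⟨b, hbN⟩, by simp [hI, hb.1, hb.2], rfl⟩
    rw [this, Nat.card_Ico]; omega
  have hIsep : ∀ i j : Fin n, i < j → ∀ x ∈ I i, ∀ y ∈ I j, x < y := by
    intro i j hij x hx y hy
    simp only [hI, Finset.mem_filter] at hx hy
    have h1 : (i.1 + 1) * m ≤ j.1 * m := Nat.mul_le_mul_right _ hij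
    have : x.1 < y.1 := by
      calc x.1 < i.1 * m + m := hx.2.2
      _ = (i.1 + 1) * m := by ring
      _ ≤ j.1 * m := h1
      _ ≤ y.1 := hy.2.1
    exact this
  -- candidate machinery
  set E : ℕ → Fin n → Finset (Fin n) :=
    (fun j w => Finset.univ.filter (fun u => G.Adj u w ∧ (π u : ℕ) < j)) with hE
  set C : ℕ → (Fin n → Fin N) → Fin n → Finset (Fin N) :=
    (fun j g w => (I w).filter (fun y => ∀ u ∈ E j w, blueB f (g u) y = true)) with hC
  have key : ∀ j : ℕ, j ≤ n → ∃ g : Fin n → Fin N,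
      (∀ v : Fin n, (π v : ℕ) < j → g v ∈ I v) ∧
      (∀ u v : Fin n, G.Adj u v → (π u : ℕ) < j → (π v : ℕ) < j →
        blueB f (g u) (g v) = true) ∧
      (∀ w : Fin n, j ≤ (π w : ℕ) → m / t ^ (E j w).card ≤ (C j g w).card) := by
    intro j
    induction j with
    | zero =>
      intro _
      refine ⟨fun _ => ⟨0, hN0⟩, by simp, by simp, ?_⟩
      intro w _
      have hE0 : E 0 w = ∅ := by simp [hE]
      have hC0 : C 0 (fun _ => (⟨0, hN0⟩ : Fin N)) w = I w := by
        simp [hC, hE0]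
      simp [hE0, hC0, hIcard w]
    | succ j ih =>
      intro hj1
      obtain ⟨g, hg1, hg2, hg3⟩ := ih (Nat.le_of_succ_le hj1)
      have hjn : j < n := hj1
      set v : Fin n := π.symm ⟨j, hjn⟩ with hv
      have hπv : (π v : ℕ) = j := by simp [hv]
      -- candidate set of v is big
      have hek : (E j v).card ≤ k := by
        have hconv : {u | G.Adj u v ∧ π u < π v}.ncard =
            (Finset.univ.filter (fun u => G.Adj u v ∧ π u < π v)).card := by
          rw [← Set.ncard_coe_finset]
          congr 1
          ext u
          simp
        refine le_trans (Finset.card_le_card ?_) (le_trans (le_of_eq hconv.symm) (hdeg v))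
        intro u hu
        simp only [hE, Finset.mem_filter] at hu ⊢
        exact ⟨Finset.mem_univ _, hu.2.1, by rw [Fin.lt_def, hπv]; exact hu.2.2⟩
      have hCv : n * t ≤ (C j g v).card := by
        have h1 := hg3 v (le_of_eq hπv.symm)
        have h2 : m / t ^ k ≤ m / t ^ (E j v).card :=
          Nat.div_le_div_left (Nat.pow_le_pow_right ht hek) (Nat.pow_pos ht)
        have h3 : n * t ≤ m / t ^ k := by
          have h4 : n * t ^ (k + 1) / t ^ k ≤ m / t ^ k := Nat.div_le_div_right hm_ge
          have h5 : n * t ^ (k + 1) / t ^ k = n * t := by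
            rw [pow_succ, show n * (t ^ k * t) = n * t * t ^ k by ring,
              Nat.mul_div_cancel _ (Nat.pow_pos ht)]
          omega
        omega
      -- future neighbours and bad sets
      set W : Finset (Fin n) :=
        Finset.univ.filter (fun w => G.Adj v w ∧ j < (π w : ℕ)) with hW
      have hWcard : W.card ≤ n - 1 := by
        have hsub : W ⊆ Finset.univ.erase v := by
          intro w hw
          simp only [hW, Finset.mem_filter] at hw
          exact Finset.mem_erase.2 ⟨(G.ne_of_adj hw.2.1).symm, Finset.mem_univ _⟩
        calc W.card ≤ (Finset.univ.erase v).card := Finset.card_le_card hsub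
        _ = n - 1 := by rw [Finset.card_erase_of_mem (Finset.mem_univ _)]; simp
      set Bad : Fin n → Finset (Fin N) := (fun w => (C j g v).filter
        (fun x => ((C j g w).filter (fun y => blueB f x y = true)).card
          < (C j g w).card / t)) with hBadDef
      have hBad : ∀ w ∈ W, (Bad w).card ≤ t - 1 := by
        intro w hw
        by_contra hcon
        have htB : t ≤ (Bad w).card := by omega
        have hvw : v ≠ w := by
          simp only [hW, Finset.mem_filter] at hw
          exact G.ne_of_adj hw.2.1
        have hside : (∀ x ∈ Bad w, ∀ y ∈ C j g w, x < y) ∨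
            (∀ x ∈ Bad w, ∀ y ∈ C j g w, y < x) := by
          have hBI : Bad w ⊆ I v := fun x hx =>
            Finset.filter_subset _ _ ((Finset.filter_subset _ _) hx)
          have hCI : C j g w ⊆ I w := Finset.filter_subset _ _
          rcases lt_or_gt_of_ne hvw with h | h
          · exact Or.inl (fun x hx y hy => hIsep v w h x (hBI hx) y (hCI hy))
          · exact Or.inr (fun x hx y hy => hIsep w v h y (hCI hy) x (hBI hx))
        exact hred (extract t ht f (Bad w) (C j g w) hside htB
          (fun x hx => (Finset.mem_filter.1 hx).2))
      set U : Finset (Fin N) := W.biUnion Bad with hU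
      have hUcard : U.card ≤ (n - 1) * (t - 1) := by
        refine le_trans Finset.card_biUnion_le ?_
        have := Finset.sum_le_card_nsmul W (fun w => (Bad w).card) (t - 1) hBad
        simp only [smul_eq_mul] at this
        exact le_trans this (Nat.mul_le_mul_right _ hWcard)
      have hlt : (n - 1) * (t - 1) < n * t := by
        have h1 : (n-1)*(t-1) ≤ (n-1)*t := Nat.mul_le_mul_left _ (Nat.sub_le _ _)
        have h2 : (n-1)*t < n*t := (Nat.mul_lt_mul_right ht).2 (Nat.sub_lt hn one_pos)
        omega
      have hne : (C j g v \ U).Nonempty := by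
        rw [← Finset.card_pos]
        have hsd : U.card + (C j g v \ U).card ≥ (C j g v).card := by
          have := Finset.card_le_card_sdiff_add_card (s := C j g v) (t := U)
          omega
        omega
      obtain ⟨x, hx⟩ := hne
      have hxC : x ∈ C j g v := (Finset.mem_sdiff.1 hx).1
      have hxU : x ∉ U := (Finset.mem_sdiff.1 hx).2
      have hxI : x ∈ I v := Finset.filter_subset _ _ hxC
      have hxblue : ∀ u ∈ E j v, blueB f (g u) x = true := (Finset.mem_filter.1 hxC).2
      set g' : Fin n → Fin N := Function.update g v x with hg'
      have hg'v : g' v = x := Function.update_self _ _ _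
      have hne_v : ∀ u : Fin n, (π u : ℕ) < j → u ≠ v := by
        intro u hu heq; rw [heq, hπv] at hu; omega
      have hg'old : ∀ u : Fin n, (π u : ℕ) < j → g' u = g u := by
        intro u hu; exact Function.update_of_ne (hne_v u hu) _ _
      have heqv : ∀ u : Fin n, (π u : ℕ) = j → u = v := by
        intro u hu
        apply π.injective
        rw [hv, Equiv.apply_symm_apply]
        exact Fin.ext hu
      refine ⟨g', ?_, ?_, ?_⟩
      · intro v' hv'
        rcases Nat.lt_succ_iff_lt_or_eq.1 hv' with h | h
        · rw [hg'old v' h]; exact hg1 v' h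
        · rw [heqv v' h, hg'v]; exact hxI
      · intro u v' hadj hu hv'
        rcases Nat.lt_succ_iff_lt_or_eq.1 hu with hu' | hu' <;>
          rcases Nat.lt_succ_iff_lt_or_eq.1 hv' with hv'' | hv''
        · rw [hg'old u hu', hg'old v' hv'']; exact hg2 u v' hadj hu' hv''
        · rw [heqv v' hv'', hg'v, hg'old u hu']
          refine hxblue u ?_
          simp only [hE, Finset.mem_filter]
          rw [heqv v' hv''] at hadj
          exact ⟨Finset.mem_univ _, hadj, hu'⟩
        · rw [heqv u hu', hg'v, hg'old v' hv'']
          rw [blueB_symm]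
          refine hxblue v' ?_
          simp only [hE, Finset.mem_filter]
          rw [heqv u hu'] at hadj
          exact ⟨Finset.mem_univ _, G.adj_symm hadj, hv''⟩
        · exfalso
          rw [heqv u hu', heqv v' hv''] at hadj
          exact G.irrefl hadj
      · intro w hw
        have hwv : w ≠ v := by
          intro hwv; rw [hwv, hπv] at hw; omega
        have hjw : j ≤ (π w : ℕ) := Nat.le_of_succ_le hw
        have hEw : ∀ u ∈ E j w, g' u = g u := by
          intro u hu
          simp only [hE, Finset.mem_filter] at hu
          exact hg'old u hu.2.2
        by_cases hvw : G.Adj v w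
        · have hwW : w ∈ W := by
            simp only [hW, Finset.mem_filter]
            exact ⟨Finset.mem_univ _, hvw, hw⟩
          have hvE : v ∉ E j w := by
            simp only [hE, Finset.mem_filter, hπv]
            omega
          have hEsucc : E (j+1) w = insert v (E j w) := by
            ext u
            simp only [hE, Finset.mem_filter, Finset.mem_insert, Finset.mem_univ,
              true_and]
            constructor
            · rintro ⟨hadj, hlt'⟩
              rcases Nat.lt_succ_iff_lt_or_eq.1 hlt' with h | h
              · exact Or.inr ⟨hadj, h⟩
              · exact Or.inl (heqv u h)
            · rintro (rfl | ⟨hadj, hlt'⟩)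
              · exact ⟨hvw, by omega⟩
              · exact ⟨hadj, by omega⟩
          have hCsucc : C (j+1) g' w = (C j g w).filter (fun y => blueB f x y = true) := by
            ext y
            simp only [hC, Finset.mem_filter, hEsucc, Finset.mem_insert]
            constructor
            · rintro ⟨hyI, hall⟩
              refine ⟨⟨hyI, fun u hu => ?_⟩, ?_⟩
              · rw [← hEw u hu]; exact hall u (Or.inr hu)
              · have := hall v (Or.inl rfl); rwa [hg'v] at this
            · rintro ⟨⟨hyI, hall⟩, hxy⟩
              refine ⟨hyI, fun u hu => ?_⟩
              rcases hu with rfl | hu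
              · rwa [hg'v]
              · rw [hEw u hu]; exact hall u hu
          have hxw : x ∉ Bad w := fun hxB => hxU (Finset.mem_biUnion.2 ⟨w, hwW, hxB⟩)
          have hxgood : (C j g w).card / t ≤
              ((C j g w).filter (fun y => blueB f x y = true)).card := by
            simp only [hBadDef, Finset.mem_filter, not_and, not_lt] at hxw
            exact hxw hxC
          have hcard : (E (j+1) w).card = (E j w).card + 1 := by
            rw [hEsucc, Finset.card_insert_of_notMem hvE]
          rw [hcard, hCsucc]
          calc m / t ^ ((E j w).card + 1) = m / t ^ (E j w).card / t := by
                rw [pow_succ]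
                exact (Nat.div_div_eq_div_mul m (t ^ (E j w).card) t).symm
          _ ≤ (C j g w).card / t := Nat.div_le_div_right (hg3 w hjw)
          _ ≤ _ := hxgood
        · have hEsucc : E (j+1) w = E j w := by
            ext u
            simp only [hE, Finset.mem_filter]
            constructor
            · rintro ⟨hu1, hadj, hlt'⟩
              rcases Nat.lt_succ_iff_lt_or_eq.1 hlt' with h | h
              · exact ⟨hu1, hadj, h⟩
              · exact absurd (heqv u h ▸ hadj) hvw
            · rintro ⟨hu1, hadj, hlt'⟩
              exact ⟨hu1, hadj, by omega⟩
          have hCsucc : C (j+1) g' w = C j g w := by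
            rw [hC]
            simp only [hEsucc]
            apply Finset.filter_congr
            intro y _
            constructor
            · intro hall u hu; rw [← hEw u hu]; exact hall u hu
            · intro hall u hu; rw [hEw u hu]; exact hall u hu
          rw [hEsucc, hCsucc]
          exact hg3 w hjw
  obtain ⟨g, hg1, hg2, _⟩ := key n le_rfl
  have hgI : ∀ a : Fin n, g a ∈ I a := fun a => hg1 a (π a).isLt
  refine ⟨g, ?_, ?_⟩
  · intro a b hab
    exact hIsep a b hab _ (hgI a) _ (hgI b)
  · intro a b hab hadj
    have hblue := hg2 a b hadj (π a).isLt (π b).isLt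
    have hlt : g a < g b := hIsep a b hab _ (hgI a) _ (hgI b)
    unfold blueB at hblue
    rwa [if_pos hlt] at hblue

/-- let `G` be a `k`-degenerate ordered graph on `n` vertices and
`N ≥ n²`. Every red/blue (`false`/`true`) coloring of the ordered complete graph
on `N` vertices contains a blue ordered copy of `G`, or a red copy of `K_{t,t}`
with `t = (N/n²)^{1/(k+1)}` whose first class lies entirely to the left of the
second. -/
theorem degenerate_blue_copy_or_red_biclique (k n N : ℕ) (hk : 0 < k)
    (G : SimpleGraph (Fin n)) (hdeg : IsKDegenerate k n G) (hN : n ^ 2 ≤ N)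
    (f : Fin N → Fin N → Bool) :
    (∃ g : Fin n → Fin N, StrictMono g ∧
        ∀ a b : Fin n, a < b → G.Adj a b → f (g a) (g b) = true) ∨
    (∃ g₁ g₂ : Fin ⌊((N : ℝ) / (n : ℝ) ^ 2) ^ ((1 : ℝ) / ((k : ℝ) + 1))⌋₊ → Fin N,
        StrictMono g₁ ∧ StrictMono g₂ ∧ (∀ a b, g₁ a < g₂ b) ∧
        ∀ a b, f (g₁ a) (g₂ b) = false) := by
  classical
  set t := ⌊((N : ℝ) / (n : ℝ) ^ 2) ^ ((1 : ℝ) / ((k : ℝ) + 1))⌋₊ with hts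
  rcases Nat.eq_zero_or_pos n with hn | hn
  · left
    subst hn
    refine ⟨Fin.elim0, ?_, ?_⟩
    · intro a b h; exact a.elim0
    · intro a; exact a.elim0
  rcases Nat.eq_zero_or_pos t with ht | ht
  · right
    rw [ht]
    refine ⟨Fin.elim0, Fin.elim0, ?_, ?_, ?_, ?_⟩
    · intro a b h; exact a.elim0
    · intro a b h; exact a.elim0
    · intro a; exact a.elim0
    · intro a; exact a.elim0
  -- main case
  have hNt : n ^ 2 * t ^ (k + 1) ≤ N := by
    set x : ℝ := (N : ℝ) / (n : ℝ) ^ 2 with hx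
    have hx0 : 0 ≤ x := by
      apply div_nonneg <;> positivity
    have hfloor : (t : ℝ) ≤ x ^ ((1 : ℝ) / ((k : ℝ) + 1)) :=
      Nat.floor_le (Real.rpow_nonneg hx0 _)
    have hk1 : ((k : ℝ) + 1) ≠ 0 := by positivity
    have hpow : ((t : ℝ)) ^ (k + 1) ≤ (x ^ ((1 : ℝ) / ((k : ℝ) + 1))) ^ (k + 1) :=
      pow_le_pow_left₀ (by positivity) hfloor _
    have hr : (x ^ ((1 : ℝ) / ((k : ℝ) + 1))) ^ (k + 1) = x := by
      rw [← Real.rpow_natCast (x ^ ((1 : ℝ) / ((k : ℝ) + 1))) (k + 1),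
        ← Real.rpow_mul hx0]
      have : (1 : ℝ) / ((k : ℝ) + 1) * ((k + 1 : ℕ) : ℝ) = 1 := by
        push_cast
        field_simp
      rw [this, Real.rpow_one]
    have hle : ((t : ℝ)) ^ (k + 1) ≤ x := hr ▸ hpow
    have hn2 : (0 : ℝ) < (n : ℝ) ^ 2 := by positivity
    have hle2 : ((t : ℝ)) ^ (k + 1) * (n : ℝ) ^ 2 ≤ (N : ℝ) := by
      rw [hx] at hle
      exact (le_div_iff₀ hn2).1 hle
    have hfin : ((n ^ 2 * t ^ (k + 1) : ℕ) : ℝ) ≤ (N : ℝ) := by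
      push_cast
      push_cast at hle2
      nlinarith [hle2]
    exact_mod_cast hfin
  by_cases hred : ∃ g₁ g₂ : Fin t → Fin N, StrictMono g₁ ∧ StrictMono g₂ ∧
      (∀ a b, g₁ a < g₂ b) ∧ ∀ a b, f (g₁ a) (g₂ b) = false
  · right; exact hred
  · left
    obtain ⟨π, hπ⟩ := hdeg
    exact main' k n N t hn ht G π hπ hNt f hred
end

section
/- For positive integers k and p, let G be a k-degenerate ordered graph with n vertices and let K_n(p) be the ordered complete p-partite graph with p consecutive intervals of n vertices each. Then OR(G, K_n(p)) ≤ n^{(1+2/k)(k+1)^{⌈log p⌉} − 2/k}. In particular, every k-degenerate ordered graph G with n vertices and interval chromatic number p satisfies OR(G; 2) ≤ n^{(1+2/k)(k+1)^{⌈log p⌉} − 2/k}. -/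
/-- The ordered complete `p`-partite graph `K_n(p)` whose `p` color classes are
`p` consecutive intervals of `n` vertices each. -/
def multipartiteIntervals (p n : ℕ) : SimpleGraph (Fin (p * n)) :=
  SimpleGraph.fromRel (fun a b => a.val / n ≠ b.val / n)

open Finset

namespace OrdRamseyAux

lemma multi_adj (p n : ℕ) (a b : Fin (p * n)) :
    (multipartiteIntervals p n).Adj a b ↔ a ≠ b ∧ (a : ℕ) / n ≠ (b : ℕ) / n := by
  unfold multipartiteIntervals
  rw [SimpleGraph.fromRel_adj]
  constructor
  · rintro ⟨h1, h2 | h2⟩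
    · exact ⟨h1, h2⟩
    · exact ⟨h1, fun h => h2 h.symm⟩
  · rintro ⟨h1, h2⟩
    exact ⟨h1, Or.inl h2⟩

lemma copy_transfer {r N N' : ℕ} (G : SimpleGraph (Fin r)) (f : Fin N' → Fin N' → Bool)
    (e : Fin N → Fin N') (he : StrictMono e) (col : Bool)
    (h : hasOrdCopyB G (fun i j => f (e i) (e j)) col) : hasOrdCopyB G f col := by
  obtain ⟨g, hg, hcond⟩ := h
  exact ⟨e ∘ g, he.comp hg, fun a b hab hadj => hcond a b hab hadj⟩

/-- From the Ramsey property at `M` and a subset `S` of size `≥ M` with no false `G`,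
find a true copy of `multi q n` inside `S`. -/
lemma find_true_multi {n q M N : ℕ} (G : SimpleGraph (Fin n))
    (hQ : ∀ A : ℕ, M ≤ A → ordRamsey2Prop (multipartiteIntervals q n) G A)
    (f : Fin N → Fin N → Bool) (S : Finset (Fin N)) (hS : M ≤ S.card)
    (hno : ¬ hasOrdCopyB G f false) :
    ∃ c : Fin (q * n) → Fin N, StrictMono c ∧ (∀ i, c i ∈ S) ∧
      ∀ a b : Fin (q * n), a < b → (multipartiteIntervals q n).Adj a b →
        f (c a) (c b) = true := by
  set e : Fin S.card → Fin N := fun i => ((S.orderIsoOfFin rfl) i : Fin N) with he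
  have hemono : StrictMono e := by
    intro i j hij
    have := (S.orderIsoOfFin rfl).strictMono hij
    exact this
  have hmem : ∀ i, e i ∈ S := fun i => ((S.orderIsoOfFin rfl) i).2
  rcases hQ S.card hS (fun i j => f (e i) (e j)) with h | h
  · obtain ⟨g, hg, hcond⟩ := h
    exact ⟨e ∘ g, hemono.comp hg, fun i => hmem _,
      fun a b hab hadj => hcond a b hab hadj⟩
  · exact absurd (copy_transfer G f e hemono false h) hno

/-- Glue two ordered true copies of `K_n(q)` with all cross pairs true into a
true copy of `K_n(q+q)`. -/
lemma glue {q n N : ℕ} (hn : 0 < n) (f : Fin N → Fin N → Bool)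
    (g₁ g₂ : Fin (q * n) → Fin N) (h₁s : StrictMono g₁) (h₂s : StrictMono g₂)
    (h₁ : ∀ a b : Fin (q * n), a < b → (multipartiteIntervals q n).Adj a b →
      f (g₁ a) (g₁ b) = true)
    (h₂ : ∀ a b : Fin (q * n), a < b → (multipartiteIntervals q n).Adj a b →
      f (g₂ a) (g₂ b) = true)
    (hlt : ∀ i j, g₁ i < g₂ j)
    (hcross : ∀ i j, f (g₁ i) (g₂ j) = true) :
    hasOrdCopyB (multipartiteIntervals (q + q) n) f true := by
  have htot : (q + q) * n = q * n + q * n := by ring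
  set g : Fin ((q + q) * n) → Fin N := fun a =>
    if h : (a : ℕ) < q * n then g₁ ⟨a, h⟩
    else g₂ ⟨(a : ℕ) - q * n, by have := a.isLt; omega⟩ with hgdef
  refine ⟨g, ?_, ?_⟩
  · intro a b hab
    have hab' : (a : ℕ) < (b : ℕ) := hab
    by_cases ha : (a : ℕ) < q * n <;> by_cases hb : (b : ℕ) < q * n
    · simp only [g, dif_pos ha, dif_pos hb]
      exact h₁s (show ((⟨(a:ℕ), ha⟩ : Fin (q*n))) < ⟨(b:ℕ), hb⟩ from hab')
    · simp only [g, dif_pos ha, dif_neg hb]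
      exact hlt _ _
    · omega
    · simp only [g, dif_neg ha, dif_neg hb]
      exact h₂s (show ((⟨(a:ℕ) - q*n, _⟩ : Fin (q*n))) < ⟨(b:ℕ) - q*n, _⟩ by
        simp only [Fin.mk_lt_mk]; omega)
  · intro a b hab hadj
    rw [multi_adj] at hadj
    obtain ⟨hne, hdiv⟩ := hadj
    have hab' : (a : ℕ) < (b : ℕ) := hab
    by_cases ha : (a : ℕ) < q * n <;> by_cases hb : (b : ℕ) < q * n
    · simp only [g, dif_pos ha, dif_pos hb]
      refine h₁ _ _ hab' ?_
      rw [multi_adj]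
      constructor
      · simp only [ne_eq, Fin.mk.injEq]; omega
      · exact hdiv
    · simp only [g, dif_pos ha, dif_neg hb]
      exact hcross _ _
    · omega
    · simp only [g, dif_neg ha, dif_neg hb]
      refine h₂ _ _ (by simp only [Fin.mk_lt_mk]; omega) ?_
      rw [multi_adj]
      have key : ∀ m : ℕ, q * n ≤ m → m / n = q + (m - q * n) / n := by
        intro m hm
        conv_lhs => rw [show m = n * q + (m - q * n) by rw [Nat.mul_comm n q]; omega]
        rw [Nat.mul_add_div hn]
      have hda : (a : ℕ) / n = q + ((a : ℕ) - q * n) / n := key _ (by omega)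
      have hdb : (b : ℕ) / n = q + ((b : ℕ) - q * n) / n := key _ (by omega)
      constructor
      · simp only [ne_eq, Fin.mk.injEq]; omega
      · show ((a:ℕ) - q*n) / n ≠ ((b:ℕ) - q*n) / n
        omega

/-- A true copy of `K_n(p')` contains a true copy of `K_n(p)` for `p ≤ p'`. -/
lemma multi_mono {p p' n N : ℕ} (hpp : p ≤ p') (f : Fin N → Fin N → Bool)
    (h : hasOrdCopyB (multipartiteIntervals p' n) f true) :
    hasOrdCopyB (multipartiteIntervals p n) f true := by
  obtain ⟨g, hg, hcond⟩ := h
  have hle : p * n ≤ p' * n := Nat.mul_le_mul_right n hpp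
  set e : Fin (p * n) → Fin (p' * n) := fun a => ⟨(a : ℕ), lt_of_lt_of_le a.isLt hle⟩ with he
  have hemono : StrictMono e := fun a b hab => by
    simp only [e, Fin.mk_lt_mk]
    exact hab
  refine ⟨g ∘ e, hg.comp hemono, fun a b hab hadj => ?_⟩
  rw [multi_adj] at hadj
  refine hcond (e a) (e b) (hemono hab) ?_
  rw [multi_adj]
  exact ⟨by simp only [e, ne_eq, Fin.mk.injEq]; exact fun h => hadj.1 (Fin.val_injective h),
    hadj.2⟩



def Eexp (k j : ℕ) : ℕ := (k+1)^j + 2 * ∑ i ∈ range j, (k+1)^i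

lemma Eexp_zero (k : ℕ) : Eexp k 0 = 1 := by simp [Eexp]

lemma Eexp_succ (k j : ℕ) : Eexp k (j+1) = Eexp k j * (k+1) + 2 := by
  unfold Eexp
  rw [pow_succ, geom_sum_succ]
  ring

lemma Eexp_ge (k j : ℕ) (hk : 1 ≤ k) : j + 1 ≤ Eexp k j := by
  have h1 : 2 ^ j ≤ (k+1) ^ j := Nat.pow_le_pow_left (by omega) j
  have h2 : j < 2 ^ j := Nat.lt_two_pow_self
  unfold Eexp
  omega

lemma qn_le_pow (k j n : ℕ) (hk : 1 ≤ k) (hn : 2 ≤ n) : 2 ^ j * n ≤ n ^ Eexp k j := by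
  have hn1 : 1 ≤ n := by omega
  calc 2 ^ j * n ≤ n ^ j * n ^ 1 := by
        have : 2 ^ j ≤ n ^ j := Nat.pow_le_pow_left hn j
        simpa using Nat.mul_le_mul_right n this
    _ = n ^ (j + 1) := by rw [← pow_add]
    _ ≤ n ^ Eexp k j := Nat.pow_le_pow_right hn1 (Eexp_ge k j hk)

lemma real_exp_eq (k j : ℕ) (hk : 1 ≤ k) :
    (1 + 2 / (k : ℝ)) * ((k : ℝ) + 1) ^ j - 2 / (k : ℝ) = ((Eexp k j : ℕ) : ℝ) := by
  have hk0 : (k : ℝ) ≠ 0 := by positivity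
  have hg : (∑ i ∈ range j, ((k : ℝ) + 1) ^ i) * (((k : ℝ) + 1) - 1) =
      ((k : ℝ) + 1) ^ j - 1 := geom_sum_mul _ j
  have hg' : (∑ i ∈ range j, ((k : ℝ) + 1) ^ i) * (k : ℝ) = ((k : ℝ) + 1) ^ j - 1 := by
    rw [← hg]; ring
  unfold Eexp
  push_cast
  field_simp
  linear_combination (-2 : ℝ) * hg'

lemma bound_nat (k j n N : ℕ) (hk : 1 ≤ k)
    (h : (n : ℝ) ^ ((1 + 2 / (k : ℝ)) * ((k : ℝ) + 1) ^ j - 2 / (k : ℝ)) ≤ (N : ℝ)) :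
    n ^ Eexp k j ≤ N := by
  rw [real_exp_eq k j hk, Real.rpow_natCast] at h
  exact_mod_cast h


lemma arithA1 (a M θ : ℕ) (ha : a ≤ M) (hθ : 1 ≤ θ) : a * (θ - 1) + M ≤ θ * M := by
  obtain ⟨θ', rfl⟩ : ∃ θ', θ = θ' + 1 := ⟨θ - 1, by omega⟩
  have h := Nat.mul_le_mul_right θ' ha
  calc a * (θ' + 1 - 1) + M = a * θ' + M := by simp
    _ ≤ M * θ' + M := by omega
    _ = (θ' + 1) * M := by ring

lemma arithA2 (n M : ℕ) (hn : 1 ≤ n) (hM : 1 ≤ M) : (n - 1) * (M - 1) + 1 ≤ n * M := by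
  obtain ⟨n', rfl⟩ : ∃ n', n = n' + 1 := ⟨n - 1, by omega⟩
  obtain ⟨M', rfl⟩ : ∃ M', M = M' + 1 := ⟨M - 1, by omega⟩
  have : (n' + 1) * (M' + 1) = n' * M' + n' + M' + 1 := by ring
  simp only [Nat.add_sub_cancel]
  omega

lemma step_lemma (n k q M : ℕ) (hn : 1 ≤ n) (hM : q * n ≤ M) (hM1 : 1 ≤ M)
    (G : SimpleGraph (Fin n)) (π : Fin n ≃ Fin n)
    (hπ : ∀ v : Fin n, {u | G.Adj u v ∧ π u < π v}.ncard ≤ k)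
    (hQ : ∀ A : ℕ, M ≤ A → ordRamsey2Prop (multipartiteIntervals q n) G A) :
    ∀ N : ℕ, n ^ 2 * M ^ (k + 1) ≤ N →
      ordRamsey2Prop (multipartiteIntervals (q + q) n) G N := by
  intro N hNbig f
  classical
  by_cases hfalse : hasOrdCopyB G f false
  · exact Or.inr hfalse
  left
  set L : ℕ := n * M ^ (k + 1) with hLdef
  have hL1 : 1 ≤ L := Nat.mul_pos hn (pow_pos hM1 (k + 1))
  have hNL : n * L ≤ N := by
    calc n * L = n ^ 2 * M ^ (k + 1) := by rw [hLdef]; ring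
      _ ≤ N := hNbig
  have hN0 : 0 < N := lt_of_lt_of_le (Nat.mul_pos hn hL1) hNL
  set W : Fin n → Finset (Fin N) := fun a =>
    Finset.univ.filter (fun i => a.val * L ≤ i.val ∧ i.val < a.val * L + L) with hWdef
  have hmemW : ∀ (a : Fin n) (i : Fin N),
      i ∈ W a ↔ (a.val * L ≤ i.val ∧ i.val < a.val * L + L) := by
    intro a i
    simp [hWdef]
  have hWcard : ∀ a : Fin n, L ≤ (W a).card := by
    intro a
    have hbound : ∀ j : ℕ, j < L → a.val * L + j < N := by
      intro j hj
      have h1 : (a.val + 1) * L ≤ n * L := Nat.mul_le_mul_right L a.isLt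
      have h2 : (a.val + 1) * L = a.val * L + L := by ring
      omega
    have hinj := Finset.card_le_card_of_injOn
      (f := fun (j : Fin L) => (⟨a.val * L + j.val, hbound j.val j.isLt⟩ : Fin N))
      (s := (Finset.univ : Finset (Fin L))) (t := W a)
      (by
        intro j _
        rw [Finset.mem_coe, hmemW]
        exact ⟨Nat.le_add_right _ _, Nat.add_lt_add_left j.isLt _⟩)
      (by
        intro j1 _ j2 _ hEq
        have : a.val * L + j1.val = a.val * L + j2.val := congrArg Fin.val hEq
        exact Fin.ext (by omega))
    simpa using hinj
  have hWlt : ∀ {a b : Fin n} {z y : Fin N}, a < b → z ∈ W a → y ∈ W b → z < y := by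
    intro a b z y hab hz hy
    rw [hmemW] at hz hy
    have h1 : (a.val + 1) ≤ b.val := hab
    have h2 : (a.val + 1) * L ≤ b.val * L := Nat.mul_le_mul_right L h1
    have h3 : (a.val + 1) * L = a.val * L + L := by ring
    rw [Fin.lt_def]
    omega
  set F : Fin n → Fin n → Fin N → Fin N → Bool :=
    fun u v a b => if u < v then f a b else f b a with hFdef
  set σf : ℕ → ℕ := fun c => n * M ^ (k + 1 - c) with hσdef
  set cnt : Fin n → ℕ → ℕ :=
    fun w t => {u : Fin n | G.Adj u w ∧ (π u : ℕ) < t}.ncard with hcntdef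
  have hσpos : ∀ c, 1 ≤ σf c := by
    intro c
    simp only [hσdef]
    exact Nat.mul_pos hn (pow_pos hM1 _)
  have hσk : ∀ c : ℕ, c ≤ k → n * M ≤ σf c := by
    intro c hc
    have h1 : M ^ 1 ≤ M ^ (k + 1 - c) := Nat.pow_le_pow_right hM1 (by omega)
    simp only [hσdef]
    calc n * M = n * M ^ 1 := by ring
      _ ≤ n * M ^ (k + 1 - c) := Nat.mul_le_mul_left n h1
  have hσsucc : ∀ c : ℕ, c < k → σf c = σf (c + 1) * M := by
    intro c hc
    simp only [hσdef]
    have : k + 1 - c = (k + 1 - (c + 1)) + 1 := by omega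
    rw [this, pow_succ]
    ring
  have hcnt_le : ∀ (w : Fin n) (t : ℕ), t ≤ (π w : ℕ) → cnt w t ≤ k := by
    intro w t ht
    simp only [hcntdef]
    refine le_trans (Set.ncard_le_ncard ?_ (Set.toFinite _)) (hπ w)
    rintro u ⟨h1, h2⟩
    exact ⟨h1, by rw [Fin.lt_def]; omega⟩
  set StateP : ℕ → Prop := fun t =>
    ∃ (x : Fin n → Fin N) (D : Fin n → Finset (Fin N)),
      (∀ v : Fin n, (π v : ℕ) < t → x v ∈ W v) ∧
      (∀ v : Fin n, t ≤ (π v : ℕ) → D v ⊆ W v) ∧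
      (∀ v : Fin n, t ≤ (π v : ℕ) → σf (cnt v t) ≤ (D v).card) ∧
      (∀ v : Fin n, t ≤ (π v : ℕ) → ∀ y ∈ D v, ∀ u : Fin n, (π u : ℕ) < t → G.Adj u v →
        F u v (x u) y = false) ∧
      (∀ u u' : Fin n, (π u : ℕ) < t → (π u' : ℕ) < t → G.Adj u u' → u < u' →
        f (x u) (x u') = false) with hSP
  have hcnt_zero : ∀ w : Fin n, cnt w 0 = 0 := by
    intro w
    simp only [hcntdef]
    convert Set.ncard_empty (Fin n) using 2
    ext u
    simp
  have key : ∀ t : ℕ, t ≤ n →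
      hasOrdCopyB (multipartiteIntervals (q + q) n) f true ∨ StateP t := by
    intro t
    induction t with
    | zero =>
      intro _
      right
      simp only [hSP]
      refine ⟨fun _ => ⟨0, hN0⟩, W, ?_, ?_, ?_, ?_, ?_⟩
      · intro v hv; omega
      · intro v _; exact Finset.Subset.refl _
      · intro v _
        rw [hcnt_zero v]
        have : σf 0 = L := by simp only [hσdef, hLdef, Nat.sub_zero]
        rw [this]
        exact hWcard v
      · intro v _ y _ u hu; omega
      · intro u u' hu; omega
    | succ t ih =>
      intro ht1
      rcases ih (by omega) with hdone | hstate
      · exact Or.inl hdone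
      simp only [hSP] at hstate
      obtain ⟨x, D, inv1, inv2, inv3, inv4, inv5⟩ := hstate
      set v : Fin n := π.symm ⟨t, by omega⟩ with hvdef
      have hπv : (π v : ℕ) = t := by rw [hvdef]; simp
      have hu_eq_v : ∀ u : Fin n, (π u : ℕ) = t → u = v := by
        intro u hu
        have : π u = π v := Fin.ext (by rw [hπv]; exact hu)
        exact π.injective this
      set lnb : Finset (Fin n) :=
        Finset.univ.filter (fun w => G.Adj v w ∧ t < (π w : ℕ)) with hlnb
      set bad : Fin n → Finset (Fin N) := fun w =>
        (D v).filter (fun x0 =>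
          ((D w).filter (fun y => F v w x0 y = false)).card < σf (cnt w t + 1)) with hbaddef
      by_cases hc1 : ∃ w ∈ lnb, M ≤ (bad w).card
      · -- blue case: build a true copy of K_n(q+q)
        obtain ⟨w, hwlnb, hbadcard⟩ := hc1
        have hw : G.Adj v w ∧ t < (π w : ℕ) := by
          have := hwlnb
          simp only [hlnb, Finset.mem_filter] at this
          exact this.2
        have hvw_ne : v ≠ w := G.ne_of_adj hw.1
        have hDw_card : σf (cnt w t) ≤ (D w).card := inv3 w (le_of_lt hw.2)
        have hcnt1 : cnt w t + 1 ≤ k := by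
          have hnotmem : v ∉ {u : Fin n | G.Adj u w ∧ (π u : ℕ) < t} := by
            intro hv
            rw [Set.mem_setOf_eq] at hv
            omega
          have hins : (insert v {u : Fin n | G.Adj u w ∧ (π u : ℕ) < t}).ncard
              = cnt w t + 1 := by
            simp only [hcntdef]
            exact Set.ncard_insert_of_notMem hnotmem (Set.toFinite _)
          have hsub : insert v {u : Fin n | G.Adj u w ∧ (π u : ℕ) < t}
              ⊆ {u : Fin n | G.Adj u w ∧ π u < π w} := by
            intro u hu
            rcases Set.mem_insert_iff.mp hu with rfl | hu'
            · exact ⟨hw.1, by rw [Fin.lt_def]; omega⟩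
            · exact ⟨hu'.1, by rw [Fin.lt_def]; have := hu'.2; omega⟩
          calc cnt w t + 1 = _ := hins.symm
            _ ≤ {u : Fin n | G.Adj u w ∧ π u < π w}.ncard :=
                Set.ncard_le_ncard hsub (Set.toFinite _)
            _ ≤ k := hπ w
        obtain ⟨c1, hc1mono, hc1mem, hc1cond⟩ :=
          OrdRamseyAux.find_true_multi G hQ f (bad w) hbadcard hfalse
        set T : Finset (Fin N) :=
          (D w).filter (fun y => ∀ i : Fin (q * n), F v w (c1 i) y = true) with hTdef
        have hTsub : T ⊆ D w := by simp only [hTdef]; exact Finset.filter_subset _ _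
        have hTcard : M ≤ T.card := by
          have hsdiff : D w \ T ⊆ (Finset.univ : Finset (Fin (q * n))).biUnion
              (fun i => (D w).filter (fun y => F v w (c1 i) y = false)) := by
            intro y hy
            rw [Finset.mem_sdiff] at hy
            obtain ⟨hy1, hy2⟩ := hy
            simp only [hTdef, Finset.mem_filter] at hy2
            push_neg at hy2
            obtain ⟨i, hi⟩ := hy2 hy1
            rw [Finset.mem_biUnion]
            exact ⟨i, Finset.mem_univ _, Finset.mem_filter.mpr
              ⟨hy1, by simp only [ne_eq, Bool.not_eq_true] at hi; exact hi⟩⟩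
          have hsum : ((Finset.univ : Finset (Fin (q * n))).biUnion
              (fun i => (D w).filter (fun y => F v w (c1 i) y = false))).card
              ≤ q * n * (σf (cnt w t + 1) - 1) := by
            refine le_trans (Finset.card_biUnion_le) ?_
            have hone : ∀ i : Fin (q * n),
                ((D w).filter (fun y => F v w (c1 i) y = false)).card
                ≤ σf (cnt w t + 1) - 1 := by
              intro i
              have := hc1mem i
              simp only [hbaddef, Finset.mem_filter] at this
              omega
            calc ∑ i : Fin (q * n), ((D w).filter (fun y => F v w (c1 i) y = false)).card
                ≤ ∑ _i : Fin (q * n), (σf (cnt w t + 1) - 1) :=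
                  Finset.sum_le_sum (fun i _ => hone i)
              _ = q * n * (σf (cnt w t + 1) - 1) := by
                  rw [Finset.sum_const, Finset.card_univ, Fintype.card_fin, smul_eq_mul]
          have e1 : σf (cnt w t) = σf (cnt w t + 1) * M := hσsucc _ (by omega)
          have e2 : q * n * (σf (cnt w t + 1) - 1) + M ≤ σf (cnt w t + 1) * M :=
            arithA1 (q * n) M _ hM (hσpos _)
          have e3 : (D w \ T).card ≤ q * n * (σf (cnt w t + 1) - 1) :=
            le_trans (Finset.card_le_card hsdiff) hsum
          have e4 : (D w \ T).card = (D w).card - T.card := Finset.card_sdiff_of_subset hTsub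
          have e5 : T.card ≤ (D w).card := Finset.card_le_card hTsub
          omega
        obtain ⟨c2, hc2mono, hc2mem, hc2cond⟩ :=
          OrdRamseyAux.find_true_multi G hQ f T hTcard hfalse
        have hbadsubDv : bad w ⊆ D v := by simp only [hbaddef]; exact Finset.filter_subset _ _
        have hc1W : ∀ i, c1 i ∈ W v := by
          intro i
          exact inv2 v (by omega) (hbadsubDv (hc1mem i))
        have hc2W : ∀ i, c2 i ∈ W w := by
          intro i
          exact inv2 w (le_of_lt hw.2) (hTsub (hc2mem i))
        have hcross : ∀ i j, F v w (c1 i) (c2 j) = true := by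
          intro i j
          have := hc2mem j
          simp only [hTdef, Finset.mem_filter] at this
          exact this.2 i
        rcases lt_or_gt_of_ne hvw_ne with hvw | hvw
        · refine Or.inl (OrdRamseyAux.glue hn f c1 c2 hc1mono hc2mono hc1cond hc2cond
            (fun i j => hWlt hvw (hc1W i) (hc2W j)) (fun i j => ?_))
          have := hcross i j
          simp only [hFdef] at this
          simpa [if_pos hvw] using this
        · refine Or.inl (OrdRamseyAux.glue hn f c2 c1 hc2mono hc1mono hc2cond hc1cond
            (fun i j => hWlt hvw (hc2W i) (hc1W j)) (fun i j => ?_))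
          have := hcross j i
          simp only [hFdef] at this
          simpa [if_neg (asymm hvw)] using this
      · -- greedy extension
        right
        push_neg at hc1
        have hDv_card : σf (cnt v t) ≤ (D v).card := inv3 v (le_of_eq hπv.symm)
        have hcntv : cnt v t ≤ k := hcnt_le v t (le_of_eq hπv.symm)
        have hDvM : n * M ≤ (D v).card := le_trans (hσk _ hcntv) hDv_card
        set B : Finset (Fin N) := lnb.biUnion bad with hBdef
        have hBcard : B.card ≤ (n - 1) * (M - 1) := by
          have h1 : B.card ≤ ∑ w ∈ lnb, (bad w).card := Finset.card_biUnion_le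
          have h2 : ∑ w ∈ lnb, (bad w).card ≤ ∑ _w ∈ lnb, (M - 1) :=
            Finset.sum_le_sum (fun w hw => by have := hc1 w hw; omega)
          have h3 : ∑ _w ∈ lnb, (M - 1) = lnb.card * (M - 1) := by
            rw [Finset.sum_const, smul_eq_mul]
          have h4 : lnb.card ≤ n - 1 := by
            have hsub : lnb ⊆ Finset.univ.erase v := by
              intro w hw
              simp only [hlnb, Finset.mem_filter] at hw
              exact Finset.mem_erase.mpr ⟨(G.ne_of_adj hw.2.1).symm, Finset.mem_univ _⟩
            calc lnb.card ≤ (Finset.univ.erase v).card := Finset.card_le_card hsub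
              _ = n - 1 := by
                rw [Finset.card_erase_of_mem (Finset.mem_univ v), Finset.card_univ,
                  Fintype.card_fin]
          calc B.card ≤ lnb.card * (M - 1) := by omega
            _ ≤ (n - 1) * (M - 1) := Nat.mul_le_mul_right _ h4
        have hgoodcard : 1 ≤ (D v \ B).card := by
          have h1 : (D v).card ≤ (D v \ B).card + B.card :=
            Finset.card_le_card_sdiff_add_card
          have h2 := arithA2 n M hn hM1
          omega
        obtain ⟨xv, hxv⟩ := Finset.card_pos.mp (show 0 < (D v \ B).card by omega)
        rw [Finset.mem_sdiff] at hxv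
        obtain ⟨hxvD, hxvB⟩ := hxv
        have hxv_good : ∀ w ∈ lnb,
            σf (cnt w t + 1) ≤ ((D w).filter (fun y => F v w xv y = false)).card := by
          intro w hw
          by_contra hcon
          push_neg at hcon
          exact hxvB (Finset.mem_biUnion.mpr ⟨w, hw,
            by simp only [hbaddef, Finset.mem_filter]; exact ⟨hxvD, hcon⟩⟩)
        set x' : Fin n → Fin N := Function.update x v xv with hx'def
        set D' : Fin n → Finset (Fin N) := fun w =>
          if G.Adj v w ∧ t < (π w : ℕ) then (D w).filter (fun y => F v w xv y = false)
          else D w with hD'def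
        have hx'v : x' v = xv := by simp [hx'def]
        have hx'ne : ∀ u : Fin n, u ≠ v → x' u = x u := by
          intro u hu
          simp only [hx'def]
          exact Function.update_of_ne hu _ _
        have hD'sub : ∀ w, D' w ⊆ D w := by
          intro w
          simp only [hD'def]
          by_cases h : G.Adj v w ∧ t < (π w : ℕ)
          · rw [if_pos h]; exact Finset.filter_subset _ _
          · rw [if_neg h]
        simp only [hSP]
        refine ⟨x', D', ?_, ?_, ?_, ?_, ?_⟩
        · -- inv1
          intro u hu
          rcases Nat.lt_or_ge (π u : ℕ) t with h | h
          · have hne : u ≠ v := by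
              intro rfl'
              rw [rfl'] at h
              omega
            rw [hx'ne u hne]
            exact inv1 u h
          · have : (π u : ℕ) = t := by omega
            have huv : u = v := hu_eq_v u this
            rw [huv, hx'v]
            exact inv2 v (le_of_eq hπv.symm) hxvD
        · -- inv2
          intro w hw
          exact subset_trans (hD'sub w) (inv2 w (by omega))
        · -- inv3
          intro w hw
          by_cases hadj : G.Adj v w
          · have hwlnb : w ∈ lnb := by
              simp only [hlnb, Finset.mem_filter]
              exact ⟨Finset.mem_univ _, hadj, by omega⟩
            have hcnteq : cnt w (t + 1) = cnt w t + 1 := by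
              simp only [hcntdef]
              have hseteq : {u : Fin n | G.Adj u w ∧ (π u : ℕ) < t + 1}
                  = insert v {u : Fin n | G.Adj u w ∧ (π u : ℕ) < t} := by
                ext u
                simp only [Set.mem_setOf_eq, Set.mem_insert_iff]
                constructor
                · rintro ⟨h1, h2⟩
                  rcases Nat.lt_or_ge (π u : ℕ) t with h3 | h3
                  · exact Or.inr ⟨h1, h3⟩
                  · exact Or.inl (hu_eq_v u (by omega))
                · rintro (rfl | ⟨h1, h2⟩)
                  · exact ⟨hadj, by omega⟩
                  · exact ⟨h1, by omega⟩
              rw [hseteq]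
              rw [Set.ncard_insert_of_notMem (by
                intro hmem
                rw [Set.mem_setOf_eq] at hmem
                omega) (Set.toFinite _)]
            rw [hcnteq]
            have : D' w = (D w).filter (fun y => F v w xv y = false) := by
              simp only [hD'def]
              exact if_pos ⟨hadj, by omega⟩
            rw [this]
            exact hxv_good w hwlnb
          · have hcnteq : cnt w (t + 1) = cnt w t := by
              simp only [hcntdef]
              congr 1
              ext u
              simp only [Set.mem_setOf_eq]
              constructor
              · rintro ⟨h1, h2⟩
                refine ⟨h1, ?_⟩
                rcases Nat.lt_or_ge (π u : ℕ) t with h3 | h3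
                · exact h3
                · exact absurd (hu_eq_v u (by omega) ▸ h1) hadj
              · rintro ⟨h1, h2⟩
                exact ⟨h1, by omega⟩
            have : D' w = D w := by
              simp only [hD'def]
              exact if_neg (fun h => hadj h.1)
            rw [hcnteq, this]
            exact inv3 w (by omega)
        · -- inv4
          intro w hw y hy u hu hadj
          rcases Nat.lt_or_ge (π u : ℕ) t with h | h
          · have hne : u ≠ v := by
              intro rfl'
              rw [rfl'] at h
              omega
            rw [hx'ne u hne]
            exact inv4 w (by omega) y (hD'sub w hy) u h hadj
          · have huv : u = v := hu_eq_v u (by omega)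
            rw [huv, hx'v]
            have : D' w = (D w).filter (fun y => F v w xv y = false) := by
              simp only [hD'def]
              exact if_pos ⟨huv ▸ hadj, by omega⟩
            rw [this, Finset.mem_filter] at hy
            exact hy.2
        · -- inv5
          intro u u' hu hu' hadj hlt
          rcases Nat.lt_or_ge (π u : ℕ) t with h | h <;>
            rcases Nat.lt_or_ge (π u' : ℕ) t with h' | h'
          · have hne : u ≠ v := fun e => by rw [e] at h; omega
            have hne' : u' ≠ v := fun e => by rw [e] at h'; omega
            rw [hx'ne u hne, hx'ne u' hne']
            exact inv5 u u' h h' hadj hlt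
          · -- u' = v
            have huv' : u' = v := hu_eq_v u' (by omega)
            have hnev : u ≠ v := huv' ▸ ne_of_lt hlt
            rw [hx'ne u hnev, huv', hx'v]
            have := inv4 v (le_of_eq hπv.symm) xv hxvD u h (huv' ▸ hadj)
            simp only [hFdef] at this
            have hultv : u < v := huv' ▸ hlt
            simpa [if_pos hultv] using this
          · -- u = v
            have huv : u = v := hu_eq_v u (by omega)
            have hne' : u' ≠ v := by intro e; rw [e] at h'; omega
            rw [hx'ne u' hne', huv, hx'v]
            have := inv4 v (le_of_eq hπv.symm) xv hxvD u' h' (G.adj_symm (huv ▸ hadj))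
            simp only [hFdef] at this
            have hnotlt : ¬ u' < v := huv ▸ asymm hlt
            simpa [if_neg hnotlt] using this
          · -- both = t : impossible
            have huv : u = v := hu_eq_v u (by omega)
            have huv' : u' = v := hu_eq_v u' (by omega)
            rw [huv, huv'] at hlt
            exact absurd hlt (lt_irrefl v)
  rcases key n le_rfl with h | h
  · exact h
  · simp only [hSP] at h
    obtain ⟨x, D, inv1, inv2, inv3, inv4, inv5⟩ := h
    exact absurd ⟨x, fun a b hab => hWlt hab (inv1 a (π a).isLt) (inv1 b (π b).isLt),
      fun a b hab hadj => inv5 a b (π a).isLt (π b).isLt hadj hab⟩ hfalse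

lemma main_claim (k n : ℕ) (hk : 1 ≤ k) (hn : 2 ≤ n) (G : SimpleGraph (Fin n))
    (π : Fin n ≃ Fin n) (hπ : ∀ v : Fin n, {u | G.Adj u v ∧ π u < π v}.ncard ≤ k) :
    ∀ j N : ℕ, n ^ Eexp k j ≤ N →
      ordRamsey2Prop (multipartiteIntervals (2 ^ j) n) G N := by
  intro j
  induction j with
  | zero =>
    intro N hN f
    left
    rw [Eexp_zero, pow_one] at hN
    refine ⟨fun a => ⟨a.val, by
      have ha := a.isLt
      have : (2:ℕ) ^ 0 * n = n := by norm_num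
      omega⟩, ?_, ?_⟩
    · intro a b hab
      exact hab
    · intro a b hab hadj
      exfalso
      rw [multi_adj] at hadj
      apply hadj.2
      have ha := a.isLt
      have hb := b.isLt
      have h1 : (2:ℕ) ^ 0 * n = n := by norm_num
      rw [Nat.div_eq_of_lt (by omega), Nat.div_eq_of_lt (by omega)]
  | succ j ih =>
    intro N hN
    have hMq : 2 ^ j * n ≤ n ^ Eexp k j := qn_le_pow k j n hk hn
    have hM1 : 1 ≤ n ^ Eexp k j := Nat.one_le_pow _ _ (by omega)
    have hbound : n ^ 2 * (n ^ Eexp k j) ^ (k + 1) ≤ N := by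
      have heq : n ^ 2 * (n ^ Eexp k j) ^ (k + 1) = n ^ Eexp k (j + 1) := by
        rw [Eexp_succ]
        rw [pow_add n (Eexp k j * (k + 1)) 2, pow_mul n (Eexp k j) (k + 1)]
        ring
      omega
    have hstep := step_lemma n k (2 ^ j) (n ^ Eexp k j) (by omega) hMq hM1 G π hπ ih N hbound
    have h2 : (2:ℕ) ^ (j + 1) = 2 ^ j + 2 ^ j := by rw [pow_succ]; ring
    rw [h2]
    exact hstep

lemma part1 (k p n : ℕ) (hk : 0 < k) (hp : 0 < p) (G : SimpleGraph (Fin n))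
    (hdeg : IsKDegenerate k n G) :
    ∀ N : ℕ,
      (n : ℝ) ^ ((1 + 2 / (k : ℝ)) * ((k : ℝ) + 1) ^ (Nat.clog 2 p) - 2 / (k : ℝ)) ≤ N →
        ordRamsey2Prop (multipartiteIntervals p n) G N := by
  intro N hN
  obtain ⟨π, hπ⟩ := hdeg
  rcases Nat.lt_or_ge n 2 with hn | hn
  · -- trivial case n ≤ 1 : G has no possible ordered pair a < b
    have hN1 : n ≤ N := by
      interval_cases n
      · omega
      · have h1 : ((1:ℕ) : ℝ) ^ ((1 + 2 / (k : ℝ)) * ((k : ℝ) + 1) ^ (Nat.clog 2 p)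
            - 2 / (k : ℝ)) = 1 := by
          rw [Nat.cast_one, Real.one_rpow]
        rw [h1] at hN
        exact_mod_cast hN
    intro f
    right
    refine ⟨fun a => ⟨a.val, lt_of_lt_of_le a.isLt hN1⟩, fun a b hab => hab,
      fun a b hab hadj => ?_⟩
    exfalso
    have ha := a.isLt
    have hb := b.isLt
    have hab' : (a : ℕ) < (b : ℕ) := hab
    omega
  · have hk1 : 1 ≤ k := hk
    have hNnat : n ^ Eexp k (Nat.clog 2 p) ≤ N := bound_nat k _ n N hk1 hN
    have hclaim := main_claim k n hk1 hn G π hπ (Nat.clog 2 p) N hNnat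
    intro f
    rcases hclaim f with h | h
    · exact Or.inl (multi_mono (Nat.le_pow_clog (by omega) p) f h)
    · exact Or.inr h

lemma part2 (k p n : ℕ) (hk : 0 < k) (hp : 0 < p) (H : SimpleGraph (Fin n))
    (hdegH : IsKDegenerate k n H)
    (hic : ∃ ic : Fin n → Fin p, Monotone ic ∧ ∀ a b : Fin n, H.Adj a b → ic a ≠ ic b)
    (N : ℕ)
    (hN : (n : ℝ) ^ ((1 + 2 / (k : ℝ)) * ((k : ℝ) + 1) ^ (Nat.clog 2 p) - 2 / (k : ℝ)) ≤ N) :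
    ordRamsey2Prop H H N := by
  obtain ⟨ic, hmono, hne⟩ := hic
  rcases Nat.eq_zero_or_pos n with rfl | hn
  · intro f
    right
    refine ⟨fun a => a.elim0, ?_, ?_⟩
    · intro a
      exact a.elim0
    · intro a
      exact a.elim0
  have h1 := part1 k p n hk hp H hdegH N hN
  intro f
  rcases h1 f with h | h
  · left
    obtain ⟨g, hg, hcond⟩ := h
    have hemb : ∀ a : Fin n, (ic a).val * n + a.val < p * n := by
      intro a
      have h1 : ((ic a).val + 1) * n ≤ p * n := Nat.mul_le_mul_right n (ic a).isLt
      have h2 : ((ic a).val + 1) * n = (ic a).val * n + n := by ring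
      have := a.isLt
      omega
    set e : Fin n → Fin (p * n) := fun a => ⟨(ic a).val * n + a.val, hemb a⟩ with he
    have hediv : ∀ a : Fin n, ((e a : ℕ)) / n = (ic a).val := by
      intro a
      show ((ic a).val * n + a.val) / n = (ic a).val
      rw [show (ic a).val * n + a.val = n * (ic a).val + a.val from by ring,
        Nat.mul_add_div hn, Nat.div_eq_of_lt a.isLt, add_zero]
    have hemono : StrictMono e := by
      intro a b hab
      show ((ic a).val * n + a.val) < ((ic b).val * n + b.val)
      have h1 : ic a ≤ ic b := hmono (le_of_lt hab)
      have hab' : (a : ℕ) < (b : ℕ) := hab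
      rcases eq_or_lt_of_le h1 with heq | hlt2
      · have h4 : (ic a).val * n = (ic b).val * n := by rw [heq]
        omega
      · have h2 : ((ic a).val + 1) * n ≤ (ic b).val * n := Nat.mul_le_mul_right n hlt2
        have h3 : ((ic a).val + 1) * n = (ic a).val * n + n := by ring
        have := a.isLt
        omega
    refine ⟨g ∘ e, hg.comp hemono, fun a b hab hadj => ?_⟩
    refine hcond (e a) (e b) (hemono hab) ?_
    rw [multi_adj]
    constructor
    · exact ne_of_lt (hemono hab)
    · rw [hediv a, hediv b]
      intro hcontra
      exact hne a b hadj (Fin.ext hcontra)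
  · exact Or.inr h

end OrdRamseyAux
/-- for a `k`-degenerate ordered graph `G` on `n` vertices,
`OR(G, K_n(p)) ≤ n^{(1+2/k)(k+1)^{⌈log p⌉} − 2/k}` (here `G` plays the blue role,
`K_n(p)` the red one); in particular, every `k`-degenerate ordered graph `H` on
`n` vertices with interval chromatic number `p` satisfies
`OR(H; 2) ≤ n^{(1+2/k)(k+1)^{⌈log p⌉} − 2/k}`. Logarithms are base 2. -/
theorem ordered_ramsey_degenerate_vs_multipartite (k p n : ℕ) (hk : 0 < k) (hp : 0 < p)
    (G : SimpleGraph (Fin n)) (hdeg : IsKDegenerate k n G) :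
    (∀ N : ℕ,
      (n : ℝ) ^ ((1 + 2 / (k : ℝ)) * ((k : ℝ) + 1) ^ (Nat.clog 2 p) - 2 / (k : ℝ)) ≤ N →
        ordRamsey2Prop (multipartiteIntervals p n) G N) ∧
    (∀ H : SimpleGraph (Fin n), IsKDegenerate k n H →
      (∃ ic : Fin n → Fin p, Monotone ic ∧ ∀ a b : Fin n, H.Adj a b → ic a ≠ ic b) →
      ∀ N : ℕ,
        (n : ℝ) ^ ((1 + 2 / (k : ℝ)) * ((k : ℝ) + 1) ^ (Nat.clog 2 p) - 2 / (k : ℝ)) ≤ N →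
          ordRamsey2Prop H H N) := by
  constructor
  · intro N hN
    exact OrdRamseyAux.part1 k p n hk hp G hdeg N hN
  · intro H hH hic N hN
    exact OrdRamseyAux.part2 k p n hk hp H hH hic N hN
end
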